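/- arXiv:1809.05287 — 2 statements merged into one kernel-verified Lean document; each statement's English description precedes it below -/
import Mathlib

section
/- In a proper d-tiling T, two distinct separations that are coplanar (i.e., degenerate in the same dimension i and contained in the same hyperplane H^(i)_x) do not intersect. -/
/- Common framework: axis-parallel boxes (with extended-real endpoints, to
accommodate the unbounded exterior boxes of `T_ext`), `d`-tilings of the cube
`[-1,1]^d`, the exterior boxes, proper tilings, slices, cuts, sides and
separations. -/

noncomputable section

open Classical

attribute [local instance] Classical.propDecidable

/-- A `d`-box, given by the lower and upper endpoints of its coordinate
intervals (extended reals, so that the unbounded exterior boxes are covered).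
The interval in coordinate `i` is `[lo i, hi i]`. -/
structure Box (d : ℕ) where
  lo : Fin d → EReal
  hi : Fin d → EReal

namespace Box

variable {d : ℕ}

/-- Membership of a (real) point in a box. -/
def mem (B : Box d) (p : Fin d → ℝ) : Prop :=
  ∀ i, B.lo i ≤ (p i : EReal) ∧ (p i : EReal) ≤ B.hi i

/-- The set of real points of a box. -/
def toSet (B : Box d) : Set (Fin d → ℝ) := {p | B.mem p}

/-- The interior of a box (for full-dimensional boxes). -/
def interior (B : Box d) : Set (Fin d → ℝ) :=
  {p | ∀ i, B.lo i < (p i : EReal) ∧ (p i : EReal) < B.hi i}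

/-- The dimension of a box: the number of non-degenerate coordinate
intervals. -/
def dim (B : Box d) : ℕ :=
  (Finset.univ.filter fun i => B.lo i < B.hi i).card

/-- A box is full-dimensional (`d`-dimensional) if all of its coordinate
intervals are non-degenerate. -/
def FullDim (B : Box d) : Prop := ∀ i, B.lo i < B.hi i

end Box

/-- Two boxes intersect when they share a (real) point. -/
def Intersects {d : ℕ} (A B : Box d) : Prop := (A.toSet ∩ B.toSet).Nonempty

/-- The dimension of the intersection `A ∩ B` of two boxes: the number of
coordinates `i` where the interval `A_i ∩ B_i` is non-degenerate. -/
def interDim {d : ℕ} (A B : Box d) : ℕ :=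
  (Finset.univ.filter fun i =>
    max (A.lo i) (B.lo i) < min (A.hi i) (B.hi i)).card

/-- Two intersecting boxes touch in dimension `i` when `A_i ∩ B_i` is
degenerate. -/
def Touch {d : ℕ} (A B : Box d) (i : Fin d) : Prop :=
  Intersects A B ∧ max (A.lo i) (B.lo i) = min (A.hi i) (B.hi i)

/-- The cube `[-1,1]^d`. -/
def cube (d : ℕ) : Set (Fin d → ℝ) := {p | ∀ i, -1 ≤ p i ∧ p i ≤ 1}

/-- A `d`-tiling: a finite collection of full-dimensional `d`-boxes contained
in `[-1,1]^d`, with pairwise disjoint interiors, whose union is `[-1,1]^d`. -/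
def IsTiling {d : ℕ} (𝒯 : Finset (Box d)) : Prop :=
  (∀ B ∈ 𝒯, B.FullDim) ∧
  (∀ B ∈ 𝒯, B.toSet ⊆ cube d) ∧
  (∀ A ∈ 𝒯, ∀ B ∈ 𝒯, A ≠ B → A.interior ∩ B.interior = ∅) ∧
  (∀ p ∈ cube d, ∃ B ∈ 𝒯, B.mem p)

/-- The exterior box `T(i,-)` (for `s = false`) resp. `T(i,+)`
(for `s = true`). -/
def extBox (d : ℕ) (i : Fin d) (s : Bool) : Box d where
  lo j := if j < i then ((-1 : ℝ) : EReal)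
          else if j = i then (if s then ((1 : ℝ) : EReal) else ⊥) else ⊥
  hi j := if j < i then ((1 : ℝ) : EReal)
          else if j = i then (if s then ⊤ else ((-1 : ℝ) : EReal)) else ⊤

/-- The family `T_ext` of the `2d` exterior boxes. -/
def extBoxes (d : ℕ) : Finset (Box d) :=
  (Finset.univ : Finset (Fin d × Bool)).image fun q => extBox d q.1 q.2

/-- The collection `T ∪ T_ext`. -/
def withExt {d : ℕ} (𝒯 : Finset (Box d)) : Finset (Box d) := 𝒯 ∪ extBoxes d

/-- A `d`-tiling is proper when every point of `ℝ^d` belongs to at most `d+1`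
boxes of `T ∪ T_ext`. -/
def Proper {d : ℕ} (𝒯 : Finset (Box d)) : Prop :=
  ∀ p : Fin d → ℝ, ((withExt 𝒯).filter fun B => B.mem p).card ≤ d + 1

/-- The hyperplane `H^(i)_x` is generic w.r.t. `𝒯` when `x` is not an endpoint
of the `i`-th interval of any box of `𝒯`. -/
def Generic {d : ℕ} (𝒯 : Finset (Box d)) (i : Fin d) (x : ℝ) : Prop :=
  ∀ B ∈ 𝒯, (x : EReal) ≠ B.lo i ∧ (x : EReal) ≠ B.hi i

/-- The slice `B|^(i)_x` of a box `B` by the hyperplane `H^(i)_x`, regarded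
as a box of `ℝ^d` by omitting coordinate `i`. -/
def sliceBox {d : ℕ} (B : Box (d + 1)) (i : Fin (d + 1)) : Box d where
  lo j := B.lo (i.succAbove j)
  hi j := B.hi (i.succAbove j)

/-- The slice `T|^(i)_x` of a tiling by the hyperplane `H^(i)_x`. -/
def sliceT {d : ℕ} (𝒯 : Finset (Box (d + 1))) (i : Fin (d + 1)) (x : ℝ) :
    Finset (Box d) :=
  (𝒯.filter fun B => B.lo i ≤ (x : EReal) ∧ (x : EReal) ≤ B.hi i).image
    fun B => sliceBox B i

/-- The box `B|^(i)-_x` (the nontrivial cases: if `B_i^+ < x` it is `B`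
itself, and if `B_i^- < x ≤ B_i^+` the interval `B_i` is replaced by
`[B_i^-, 1]`; the empty case `x ≤ B_i^-` is filtered out in `cutMinus`). -/
def cutMinusBox {d : ℕ} (B : Box d) (i : Fin d) (x : ℝ) : Box d :=
  if B.hi i < (x : EReal) then B
  else ⟨B.lo, Function.update B.hi i ((1 : ℝ) : EReal)⟩

/-- The box `B|^(i)+_x` (the nontrivial cases: if `x < B_i^-` it is `B`
itself, and if `B_i^- ≤ x < B_i^+` the interval `B_i` is replaced by
`[-1, B_i^+]`; the empty case `B_i^+ ≤ x` is filtered out in `cutPlus`). -/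
def cutPlusBox {d : ℕ} (B : Box d) (i : Fin d) (x : ℝ) : Box d :=
  if (x : EReal) < B.lo i then B
  else ⟨Function.update B.lo i ((-1 : ℝ) : EReal), B.hi⟩

/-- The collection `T|^(i)-_x` of nonempty boxes `B|^(i)-_x`, `B ∈ T`. -/
def cutMinus {d : ℕ} (𝒯 : Finset (Box d)) (i : Fin d) (x : ℝ) :
    Finset (Box d) :=
  (𝒯.filter fun B => B.lo i < (x : EReal)).image fun B => cutMinusBox B i x

/-- The collection `T|^(i)+_x` of nonempty boxes `B|^(i)+_x`, `B ∈ T`. -/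
def cutPlus {d : ℕ} (𝒯 : Finset (Box d)) (i : Fin d) (x : ℝ) :
    Finset (Box d) :=
  (𝒯.filter fun B => (x : EReal) < B.hi i).image fun B => cutPlusBox B i x

/-- The side `S(B,i,-)` (for `s = false`) resp. `S(B,i,+)` (for `s = true`)
of a box `B`. -/
def sideBox {d : ℕ} (B : Box d) (i : Fin d) (s : Bool) : Box d where
  lo j := if j = i then (if s then B.hi i else B.lo i) else B.lo j
  hi j := if j = i then (if s then B.hi i else B.lo i) else B.hi j

/-- The set of all sides of boxes of `T ∪ T_ext`. -/
def sides {d : ℕ} (𝒯 : Finset (Box d)) : Finset (Box d) :=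
  ((withExt 𝒯) ×ˢ (Finset.univ : Finset (Fin d × Bool))).image
    fun q => sideBox q.1 q.2.1 q.2.2

/-- Two sides are linked when they intersect on a `(d-1)`-dimensional box. -/
def Linked {d : ℕ} (S S' : Box d) : Prop :=
  Intersects S S' ∧ interDim S S' = d - 1

/-- The linking relation, restricted to the sides of `T ∪ T_ext`. -/
def linkRel {d : ℕ} (𝒯 : Finset (Box d)) (S S' : Box d) : Prop :=
  S ∈ sides 𝒯 ∧ S' ∈ sides 𝒯 ∧ Linked S S'

/-- The `∼`-equivalence class of a side (sides reachable by chains of linked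
sides). -/
def sepClass {d : ℕ} (𝒯 : Finset (Box d)) (S₀ : Box d) : Set (Box d) :=
  {S | Relation.ReflTransGen (linkRel 𝒯) S₀ S}

/-- The separation generated by a side `S₀`: the union of the sides in its
`∼`-equivalence class. -/
def sepSet {d : ℕ} (𝒯 : Finset (Box d)) (S₀ : Box d) : Set (Fin d → ℝ) :=
  ⋃ S ∈ sepClass 𝒯 S₀, S.toSet

/-- `S` is degenerate in dimension `i` with value `x`, i.e. it is contained in
the hyperplane `H^(i)_x`. -/
def DegenAt {d : ℕ} (S : Box d) (i : Fin d) (x : ℝ) : Prop :=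
  S.lo i = (x : EReal) ∧ S.hi i = (x : EReal)

/-- A tiling is in general position when no two distinct separations are
coplanar: any two sides whose separations lie in a common hyperplane
`H^(i)_x` are `∼`-equivalent. -/
def GeneralPosition {d : ℕ} (𝒯 : Finset (Box d)) : Prop :=
  ∀ S₀ ∈ sides 𝒯, ∀ S₁ ∈ sides 𝒯, ∀ (i : Fin d) (x : ℝ),
    DegenAt S₀ i x → DegenAt S₁ i x →
      Relation.ReflTransGen (linkRel 𝒯) S₀ S₁

/-- The dimension of the intersection `⋂_{B ∈ 𝓑} B` of a finite family of
boxes: the number of coordinates where the intersected interval is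
non-degenerate. -/
def interDimAll {d : ℕ} (𝓑 : Finset (Box d)) : ℕ :=
  (Finset.univ.filter fun i =>
    𝓑.sup (fun B => B.lo i) < 𝓑.inf (fun B => B.hi i)).card

/-- The digraph `G(T)`: an arc from `A` to `B` (for distinct `A, B ∈ T`) iff
`B_i^- < A_i^+` for all `i`. -/
def tilingArc {d : ℕ} (𝒯 : Finset (Box d)) (A B : Box d) : Prop :=
  A ∈ 𝒯 ∧ B ∈ 𝒯 ∧ A ≠ B ∧ ∀ i, B.lo i < A.hi i

/-! ### Auxiliary development for stmt12 -/

namespace Stmt12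

open Finset

variable {d : ℕ}

/-- A real strictly between two `EReal`s. -/
lemma exists_real_btwn {a b : EReal} (h : a < b) : ∃ y : ℝ, a < (y : EReal) ∧ (y : EReal) < b :=
  EReal.exists_between_coe_real h

/-- If `a ≤ c + δ * w` for arbitrarily small `δ > 0`, then `a ≤ c`. -/
lemma ereal_le_of_small (a : EReal) (c w : ℝ)
    (h : ∀ ε : ℝ, 0 < ε → ∃ δ : ℝ, 0 < δ ∧ δ ≤ ε ∧ a ≤ ((c + δ * w : ℝ) : EReal)) :
    a ≤ (c : EReal) := by
  rcases le_or_gt w 0 with hw | hw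
  · obtain ⟨δ, hδ, -, hle⟩ := h 1 one_pos
    refine hle.trans ?_
    exact_mod_cast add_le_of_nonpos_right (mul_nonpos_of_nonneg_of_nonpos hδ.le hw)
  · by_contra hc
    push_neg at hc
    obtain ⟨y, hy1, hy2⟩ := exists_real_btwn hc
    have hcy : c < y := by exact_mod_cast hy1
    obtain ⟨δ, hδ, hδ', hle⟩ := h ((y - c) / w) (div_pos (by linarith) hw)
    have hyc : c + δ * w ≤ y := by
      have := (le_div_iff₀ hw).1 hδ'
      linarith
    have h2 : a ≤ ((y : ℝ) : EReal) := hle.trans (by exact_mod_cast hyc)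
    exact absurd (h2.trans_lt hy2) (lt_irrefl _)

/-- If `c + δ * w ≤ a` for arbitrarily small `δ > 0`, then `c ≤ a`. -/
lemma ereal_ge_of_small (a : EReal) (c w : ℝ)
    (h : ∀ ε : ℝ, 0 < ε → ∃ δ : ℝ, 0 < δ ∧ δ ≤ ε ∧ ((c + δ * w : ℝ) : EReal) ≤ a) :
    (c : EReal) ≤ a := by
  rcases le_or_gt 0 w with hw | hw
  · obtain ⟨δ, hδ, -, hle⟩ := h 1 one_pos
    refine le_trans ?_ hle
    exact_mod_cast le_add_of_nonneg_right (mul_nonneg hδ.le hw)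
  · by_contra hc
    push_neg at hc
    obtain ⟨y, hy1, hy2⟩ := exists_real_btwn hc
    have hyc : y < c := by exact_mod_cast hy2
    have hww : (0:ℝ) < -w := by linarith
    obtain ⟨δ, hδ, hδ', hle⟩ := h ((c - y) / (-w)) (div_pos (by linarith) hww)
    have hycc : y ≤ c + δ * w := by
      have := (le_div_iff₀ hww).1 hδ'
      linarith
    have h2 : ((y : ℝ) : EReal) ≤ a := le_trans (by exact_mod_cast hycc) hle
    exact absurd (hy1.trans_le h2) (lt_irrefl _)

lemma extBox_lo_of_lt {i j : Fin d} (h : j < i) (s : Bool) :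
    (extBox d i s).lo j = ((-1 : ℝ) : EReal) := if_pos h

lemma extBox_hi_of_lt {i j : Fin d} (h : j < i) (s : Bool) :
    (extBox d i s).hi j = ((1 : ℝ) : EReal) := if_pos h

lemma extBox_lo_self (i : Fin d) (s : Bool) :
    (extBox d i s).lo i = (if s then ((1 : ℝ) : EReal) else ⊥) := by
  simp [extBox]

lemma extBox_hi_self (i : Fin d) (s : Bool) :
    (extBox d i s).hi i = (if s then ⊤ else ((-1 : ℝ) : EReal)) := by
  simp [extBox]

lemma extBox_lo_of_gt {i j : Fin d} (h : i < j) (s : Bool) :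
    (extBox d i s).lo j = ⊥ := by
  simp [extBox, not_lt_of_gt h, (h.ne').symm, h.ne']

lemma extBox_hi_of_gt {i j : Fin d} (h : i < j) (s : Bool) :
    (extBox d i s).hi j = ⊤ := by
  simp [extBox, not_lt_of_gt h, h.ne']

lemma extBox_fullDim (i : Fin d) (s : Bool) : (extBox d i s).FullDim := by
  intro j
  rcases lt_trichotomy j i with h | h | h
  · rw [extBox_lo_of_lt h, extBox_hi_of_lt h]
    exact_mod_cast (by norm_num : (-1:ℝ) < 1)
  · subst h
    rw [extBox_lo_self, extBox_hi_self]
    cases s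
    · simpa using bot_lt_iff_ne_bot.2 (EReal.coe_ne_bot (-1))
    · simpa using lt_top_iff_ne_top.2 (EReal.coe_ne_top 1)
  · rw [extBox_lo_of_gt h, extBox_hi_of_gt h]
    exact bot_lt_top

lemma mem_extBox_iff {i : Fin d} {s : Bool} {p : Fin d → ℝ} :
    (extBox d i s).mem p ↔
      (∀ j, j < i → -1 ≤ p j ∧ p j ≤ 1) ∧ (if s then 1 ≤ p i else p i ≤ -1) := by
  constructor
  · intro h
    refine ⟨fun j hj => ?_, ?_⟩
    · have := h j
      rw [extBox_lo_of_lt hj, extBox_hi_of_lt hj] at this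
      exact ⟨by exact_mod_cast this.1, by exact_mod_cast this.2⟩
    · cases s
      · have h2 := (h i).2
        rw [extBox_hi_self] at h2
        simp only [Bool.false_eq_true, if_false] at h2 ⊢
        exact EReal.coe_le_coe_iff.1 h2
      · have h2 := (h i).1
        rw [extBox_lo_self] at h2
        simp only [if_true] at h2 ⊢
        exact EReal.coe_le_coe_iff.1 h2
  · rintro ⟨h1, h2⟩ j
    rcases lt_trichotomy j i with h | h | h
    · rw [extBox_lo_of_lt h, extBox_hi_of_lt h]
      obtain ⟨a, b⟩ := h1 j h
      exact ⟨by exact_mod_cast a, by exact_mod_cast b⟩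
    · subst h
      rw [extBox_lo_self, extBox_hi_self]
      cases s
      · simp only [Bool.false_eq_true, if_false] at h2 ⊢
        exact ⟨bot_le, EReal.coe_le_coe_iff.2 h2⟩
      · simp only [if_true] at h2 ⊢
        exact ⟨EReal.coe_le_coe_iff.2 h2, le_top⟩
    · rw [extBox_lo_of_gt h, extBox_hi_of_gt h]
      exact ⟨bot_le, le_top⟩

lemma withExt_fullDim {𝒯 : Finset (Box d)} (hT : IsTiling 𝒯) {B : Box d}
    (hB : B ∈ withExt 𝒯) : B.FullDim := by
  rcases Finset.mem_union.1 hB with h | h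
  · exact hT.1 B h
  · simp only [extBoxes, Finset.mem_image] at h
    obtain ⟨⟨i, s⟩, -, rfl⟩ := h
    exact extBox_fullDim i s

lemma extBox_mem_extBoxes (i : Fin d) (s : Bool) : extBox d i s ∈ extBoxes d := by
  simp only [extBoxes, Finset.mem_image]
  exact ⟨(i, s), Finset.mem_univ _, rfl⟩

/-- Every point of `ℝ^d` is in some box of `T ∪ T_ext`. -/
lemma exists_mem_withExt {𝒯 : Finset (Box d)} (hT : IsTiling 𝒯) (p : Fin d → ℝ) :
    ∃ B ∈ withExt 𝒯, B.mem p := by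
  by_cases hp : p ∈ cube d
  · obtain ⟨B, hB, hmem⟩ := hT.2.2.2 p hp
    exact ⟨B, Finset.mem_union_left _ hB, hmem⟩
  · simp only [cube, Set.mem_setOf_eq] at hp
    push_neg at hp
    have hex : ∃ n : ℕ, ∃ h : n < d, ¬(-1 ≤ p ⟨n, h⟩ ∧ p ⟨n, h⟩ ≤ 1) := by
      obtain ⟨i, hi⟩ := hp
      refine ⟨i.1, i.2, ?_⟩
      simpa using hi
    classical
    obtain ⟨hn, hni⟩ := Nat.find_spec hex
    set n := Nat.find hex
    set i : Fin d := ⟨n, hn⟩ with hidef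
    have hmin : ∀ m : Fin d, m < i → -1 ≤ p m ∧ p m ≤ 1 := by
      intro m hm
      by_contra hc
      have : n ≤ m.1 := Nat.find_le ⟨m.2, by simpa using hc⟩
      exact absurd hm (not_lt.2 (show i ≤ m from this))
    have hii : ¬(-1 ≤ p i ∧ p i ≤ 1) := hni
    rcases not_and_or.1 hii with h | h
    · push_neg at h
      exact ⟨extBox d i false, Finset.mem_union_right _ (extBox_mem_extBoxes i false),
        mem_extBox_iff.2 ⟨fun j hj => hmin j hj, by simp; linarith⟩⟩
    · push_neg at h
      exact ⟨extBox d i true, Finset.mem_union_right _ (extBox_mem_extBoxes i true),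
        mem_extBox_iff.2 ⟨fun j hj => hmin j hj, by simp; linarith⟩⟩

/-- Interiors of distinct boxes of `T ∪ T_ext` are disjoint. -/
lemma interior_disjoint {𝒯 : Finset (Box d)} (hT : IsTiling 𝒯) {A B : Box d}
    (hA : A ∈ withExt 𝒯) (hB : B ∈ withExt 𝒯) (hAB : A ≠ B) :
    A.interior ∩ B.interior = ∅ := by
  have extint : ∀ (i : Fin d) (s : Bool) (q : Fin d → ℝ),
      q ∈ (extBox d i s).interior → ¬ q ∈ cube d := by
    intro i s q hq hqc
    have := hq i
    rw [extBox_lo_self, extBox_hi_self] at this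
    have hc := hqc i
    cases s
    · simp only [Bool.false_eq_true, if_false] at this
      have : (q i : EReal) < ((-1:ℝ) : EReal) := this.2
      have : q i < -1 := by exact_mod_cast this
      linarith [hc.1]
    · simp only [if_true] at this
      have : ((1:ℝ) : EReal) < (q i : EReal) := this.1
      have : 1 < q i := by exact_mod_cast this
      linarith [hc.2]
  have tileint : ∀ C : Box d, C ∈ 𝒯 → C.interior ⊆ cube d := by
    intro C hC q hq
    refine hT.2.1 C hC ?_
    intro l
    exact ⟨(hq l).1.le, (hq l).2.le⟩
  rcases Finset.mem_union.1 hA with hA' | hA' <;> rcases Finset.mem_union.1 hB with hB' | hB'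
  · exact hT.2.2.1 A hA' B hB' hAB
  · ext q
    simp only [Set.mem_inter_iff, Set.mem_empty_iff_false, iff_false, not_and]
    intro hqA hqB
    simp only [extBoxes, Finset.mem_image] at hB'
    obtain ⟨⟨i, s⟩, -, rfl⟩ := hB'
    exact extint i s q hqB (tileint A hA' hqA)
  · ext q
    simp only [Set.mem_inter_iff, Set.mem_empty_iff_false, iff_false, not_and]
    intro hqA hqB
    simp only [extBoxes, Finset.mem_image] at hA'
    obtain ⟨⟨i, s⟩, -, rfl⟩ := hA'
    exact extint i s q hqA (tileint B hB' hqB)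
  · simp only [extBoxes, Finset.mem_image] at hA' hB'
    obtain ⟨⟨i, s⟩, -, rfl⟩ := hA'
    obtain ⟨⟨i', s'⟩, -, rfl⟩ := hB'
    ext q
    simp only [Set.mem_inter_iff, Set.mem_empty_iff_false, iff_false, not_and]
    intro hqA hqB
    have key : ∀ (i₁ i₂ : Fin d) (s₁ s₂ : Bool), i₁ < i₂ →
        q ∈ (extBox d i₁ s₁).interior → q ∈ (extBox d i₂ s₂).interior → False := by
      intro i₁ i₂ s₁ s₂ hlt h1 h2
      have ha := h1 i₁
      rw [extBox_lo_self, extBox_hi_self] at ha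
      have hb := h2 i₁
      rw [extBox_lo_of_lt hlt, extBox_hi_of_lt hlt] at hb
      have hb1 : (-1:ℝ) < q i₁ := by exact_mod_cast hb.1
      have hb2 : q i₁ < 1 := by exact_mod_cast hb.2
      cases s₁
      · simp only [Bool.false_eq_true, if_false] at ha
        have : q i₁ < -1 := by exact_mod_cast ha.2
        linarith
      · simp only [if_true] at ha
        have : (1:ℝ) < q i₁ := by exact_mod_cast ha.1
        linarith
    rcases lt_trichotomy i i' with hlt | heq | hlt
    · exact key i i' s s' hlt hqA hqB
    · subst heq
      have hss : s ≠ s' := fun hc => hAB (by rw [hc])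
      have opp : ∀ s₁ s₂ : Bool, s₁ = false → s₂ = true →
          q ∈ (extBox d i s₁).interior → q ∈ (extBox d i s₂).interior → False := by
        intro s₁ s₂ hs₁ hs₂ hq1 hq2
        subst hs₁; subst hs₂
        have h1 := (hq1 i).2
        rw [extBox_hi_self] at h1
        simp only [Bool.false_eq_true, if_false] at h1
        have h2 := (hq2 i).1
        rw [extBox_lo_self] at h2
        simp only [if_true] at h2
        have h1' : q i < -1 := EReal.coe_lt_coe_iff.1 h1
        have h2' : (1:ℝ) < q i := EReal.coe_lt_coe_iff.1 h2
        linarith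
      cases s <;> cases s'
      · exact hss rfl
      · exact opp _ _ rfl rfl hqA hqB
      · exact opp _ _ rfl rfl hqB hqA
      · exact hss rfl
    · exact key i' i s' s hlt hqB hqA

/-- Two distinct boxes of `T ∪ T_ext` sharing a point must touch oppositely in
some coordinate. -/
lemma exists_conflict {𝒯 : Finset (Box d)} (hT : IsTiling 𝒯) {A B : Box d}
    (hA : A ∈ withExt 𝒯) (hB : B ∈ withExt 𝒯) (hAB : A ≠ B) {u : Fin d → ℝ}
    (huA : A.mem u) (huB : B.mem u) :
    ∃ l, ((u l : EReal) = A.hi l ∧ (u l : EReal) = B.lo l) ∨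
         ((u l : EReal) = A.lo l ∧ (u l : EReal) = B.hi l) := by
  by_contra hc
  push_neg at hc
  have hAfd := withExt_fullDim hT hA
  have hBfd := withExt_fullDim hT hB
  have hstep : ∀ l, ∃ q : ℝ,
      (A.lo l < (q:EReal) ∧ (q:EReal) < A.hi l) ∧ (B.lo l < (q:EReal) ∧ (q:EReal) < B.hi l) := by
    intro l
    have hL : max (A.lo l) (B.lo l) < min (A.hi l) (B.hi l) := by
      rcases lt_or_ge (max (A.lo l) (B.lo l)) (min (A.hi l) (B.hi l)) with h | h
      · exact h
      · exfalso
        have h1 : max (A.lo l) (B.lo l) ≤ (u l : EReal) := by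
          exact max_le (huA l).1 (huB l).1
        have h2 : (u l : EReal) ≤ min (A.hi l) (B.hi l) := le_min (huA l).2 (huB l).2
        have heq1 : max (A.lo l) (B.lo l) = (u l : EReal) :=
          le_antisymm h1 (le_trans h2 h)
        have heq2 : (u l : EReal) = min (A.hi l) (B.hi l) :=
          le_antisymm h2 (le_trans h heq1.le)
        have hlo : (u l : EReal) = A.lo l ∨ (u l : EReal) = B.lo l := by
          rcases max_choice (A.lo l) (B.lo l) with hm | hm <;> rw [hm] at heq1
          · exact Or.inl heq1.symm
          · exact Or.inr heq1.symm
        have hhi : (u l : EReal) = A.hi l ∨ (u l : EReal) = B.hi l := by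
          rcases min_choice (A.hi l) (B.hi l) with hm | hm <;> rw [hm] at heq2
          · exact Or.inl heq2
          · exact Or.inr heq2
        rcases hlo with h3 | h3 <;> rcases hhi with h4 | h4
        · have := hAfd l
          rw [← h3, ← h4] at this
          exact lt_irrefl _ this
        · exact (hc l).2 h3 h4
        · exact (hc l).1 h4 h3
        · have := hBfd l
          rw [← h3, ← h4] at this
          exact lt_irrefl _ this
    obtain ⟨q, hq1, hq2⟩ := exists_real_btwn hL
    exact ⟨q, ⟨(le_max_left _ _).trans_lt hq1, hq2.trans_le (min_le_left _ _)⟩,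
      ⟨(le_max_right _ _).trans_lt hq1, hq2.trans_le (min_le_right _ _)⟩⟩
  choose q hq using hstep
  have : q ∈ A.interior ∩ B.interior := ⟨fun l => (hq l).1, fun l => (hq l).2⟩
  rw [interior_disjoint hT hA hB hAB] at this
  exact this

/-- Tiles have coordinates within `[-1, 1]`. -/
lemma tile_bounds {𝒯 : Finset (Box d)} (hT : IsTiling 𝒯) {B : Box d} (hB : B ∈ 𝒯)
    (l : Fin d) : ((-1:ℝ) : EReal) ≤ B.lo l ∧ B.hi l ≤ ((1:ℝ) : EReal) := by
  have hfd := hT.1 B hB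
  have hcube := hT.2.1 B hB
  choose c hc1 hc2 using fun m => exists_real_btwn (hfd m)
  constructor
  · by_contra hcon
    push_neg at hcon
    have hlt : B.lo l < min (B.hi l) (((-1:ℝ)):EReal) := lt_min (hfd l) hcon
    obtain ⟨ql, hql1, hql2⟩ := exists_real_btwn hlt
    have hmem : B.mem (Function.update c l ql) := by
      intro m
      by_cases hm : m = l
      · subst hm
        rw [Function.update_self]
        exact ⟨hql1.le, (hql2.trans_le (min_le_left _ _)).le⟩
      · rw [Function.update_of_ne hm]
        exact ⟨(hc1 m).le, (hc2 m).le⟩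
    have := (hcube hmem l).1
    rw [Function.update_self] at this
    have h2 : (ql : EReal) < ((-1:ℝ):EReal) := hql2.trans_le (min_le_right _ _)
    have h2' : ql < -1 := EReal.coe_lt_coe_iff.1 h2
    linarith
  · by_contra hcon
    push_neg at hcon
    have hlt : max (B.lo l) (((1:ℝ)):EReal) < B.hi l := max_lt (hfd l) hcon
    obtain ⟨ql, hql1, hql2⟩ := exists_real_btwn hlt
    have hmem : B.mem (Function.update c l ql) := by
      intro m
      by_cases hm : m = l
      · subst hm
        rw [Function.update_self]
        exact ⟨((le_max_left _ _).trans_lt hql1).le, hql2.le⟩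
      · rw [Function.update_of_ne hm]
        exact ⟨(hc1 m).le, (hc2 m).le⟩
    have := (hcube hmem l).2
    rw [Function.update_self] at this
    have h2 : ((1:ℝ):EReal) < (ql : EReal) := (le_max_right _ _).trans_lt hql1
    have h2' : (1:ℝ) < ql := EReal.coe_lt_coe_iff.1 h2
    linarith

/-- **Key lemma**: if every box of `T ∪ T_ext` containing `u` crosses coordinate `j`
strictly, then at most `d` boxes contain `u`. -/
lemma crossing_count {𝒯 : Finset (Box d)} (hT : IsTiling 𝒯) (hP : Proper 𝒯)
    (u : Fin d → ℝ) (j : Fin d)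
    (hcross : ∀ B ∈ withExt 𝒯, B.mem u → B.lo j < (u j : EReal) ∧ (u j : EReal) < B.hi j) :
    ((withExt 𝒯).filter fun B => B.mem u).card ≤ d := by
  classical
  set F := (withExt 𝒯).filter fun B => B.mem u with hF
  have hFwe : ∀ B ∈ F, B ∈ withExt 𝒯 := fun B hB => (Finset.mem_filter.1 hB).1
  have hFu : ∀ B ∈ F, B.mem u := fun B hB => (Finset.mem_filter.1 hB).2
  rcases Finset.eq_empty_or_nonempty F with he | hne
  · simp [he]
  obtain ⟨W, hWF, hWmin⟩ := F.exists_min_image (fun B => B.hi j) hne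
  have hWwe : W ∈ withExt 𝒯 := hFwe W hWF
  have hWu : W.mem u := hFu W hWF
  by_cases htop : W.hi j = ⊤
  · -- all boxes in `F` are exterior boxes; they inject into `Fin d`
    have hext : ∀ B ∈ F, ∃ q : Fin d × Bool, B = extBox d q.1 q.2 := by
      intro B hB
      have hBtop : B.hi j = ⊤ := top_le_iff.1 (htop ▸ hWmin B hB)
      rcases Finset.mem_union.1 (hFwe B hB) with h | h
      · exfalso
        have hbd := (tile_bounds hT h j).2
        rw [hBtop] at hbd
        exact EReal.coe_ne_top 1 (top_le_iff.1 hbd)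
      · simp only [extBoxes, Finset.mem_image] at h
        obtain ⟨q, -, rfl⟩ := h
        exact ⟨q, rfl⟩
    set f : Box d → Fin d := fun B =>
      if h : ∃ q : Fin d × Bool, B = extBox d q.1 q.2 then h.choose.1 else j with hf
    have hinj : Set.InjOn f F := by
      intro B₁ hB₁ B₂ hB₂ heq
      have h₁ := hext B₁ (Finset.mem_coe.1 hB₁)
      have h₂ := hext B₂ (Finset.mem_coe.1 hB₂)
      have e₁ := h₁.choose_spec
      have e₂ := h₂.choose_spec
      rw [hf] at heq
      simp only [dif_pos h₁, dif_pos h₂] at heq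
      rw [e₁, e₂, heq]
      by_cases hs : h₁.choose.2 = h₂.choose.2
      · rw [hs]
      · exfalso
        have m₁ := hFu B₁ (Finset.mem_coe.1 hB₁)
        have m₂ := hFu B₂ (Finset.mem_coe.1 hB₂)
        rw [e₁, mem_extBox_iff] at m₁
        rw [e₂, mem_extBox_iff] at m₂
        have c₁ := m₁.2
        have c₂ := m₂.2
        rw [heq] at c₁
        rcases Bool.eq_false_or_eq_true h₁.choose.2 with hb₁ | hb₁ <;>
          rcases Bool.eq_false_or_eq_true h₂.choose.2 with hb₂ | hb₂ <;>
            rw [hb₁] at c₁ hs <;> rw [hb₂] at c₂ hs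
        · exact hs rfl
        · simp only [Bool.false_eq_true, if_false, if_true] at c₁ c₂
          linarith
        · simp only [Bool.false_eq_true, if_false, if_true] at c₁ c₂
          linarith
        · exact hs rfl
    calc F.card ≤ (Finset.univ : Finset (Fin d)).card :=
          Finset.card_le_card_of_injOn f (fun B _ => Finset.mem_univ _) hinj
    _ = d := Finset.card_univ.trans (Fintype.card_fin d)
  · -- main case: push to the endpoint `b` and find a new box there
    obtain ⟨b, hb⟩ : ∃ b : ℝ, W.hi j = (b : EReal) := by
      have hbot : W.hi j ≠ ⊥ := ne_bot_of_gt (hcross W hWwe hWu).2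
      lift W.hi j to ℝ using ⟨htop, hbot⟩ with b hbb
      exact ⟨b, rfl⟩
    have hub : u j < b := EReal.coe_lt_coe_iff.1 (hb ▸ (hcross W hWwe hWu).2)
    set e : Fin d → ℝ := Function.update u j b with hedef
    set v : Fin d → ℝ := fun l =>
      if l = j then 1 else
        if (u l : EReal) = W.lo l then 1 else if (u l : EReal) = W.hi l then -1 else 0
      with hv
    set x : ℝ → Fin d → ℝ := fun t l => e l + t * v l with hx
    have hmeme : ∀ B ∈ F, B.mem e := by
      intro B hB l
      by_cases hl : l = j
      · subst hl
        rw [hedef, Function.update_self]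
        constructor
        · exact le_trans (hcross B (hFwe B hB) (hFu B hB)).1.le (by exact_mod_cast hub.le)
        · exact hb ▸ hWmin B hB
      · rw [hedef, Function.update_of_ne hl]
        exact hFu B hB l
    have hnot : ∀ t : ℝ, 0 < t → ∀ B ∈ F, ¬ B.mem (x t) := by
      intro t ht B hB hmem
      by_cases hBW : B = W
      · subst hBW
        have h1 := (hmem j).2
        have hvj : v j = 1 := by simp [hv]
        have hej : e j = b := Function.update_self j b u
        simp only [hx] at h1
        rw [hej, hvj, mul_one, hb] at h1
        have : b + t ≤ b := EReal.coe_le_coe_iff.1 h1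
        linarith
      · obtain ⟨l, hl⟩ := exists_conflict hT (hFwe B hB) hWwe hBW (hFu B hB) hWu
        have hlj : l ≠ j := by
          rintro rfl
          rcases hl with ⟨h1, -⟩ | ⟨h1, -⟩
          · exact absurd h1 (ne_of_lt (hcross B (hFwe B hB) (hFu B hB)).2)
          · exact absurd h1.symm (ne_of_lt (hcross B (hFwe B hB) (hFu B hB)).1)
        have hel : e l = u l := Function.update_of_ne hlj _ _
        rcases hl with ⟨h1, h2⟩ | ⟨h1, h2⟩
        · have hvl : v l = 1 := by rw [hv]; simp only [if_neg hlj, if_pos h2]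
          have h3 := (hmem l).2
          simp only [hx] at h3
          rw [hel, hvl, mul_one, ← h1] at h3
          have : u l + t ≤ u l := EReal.coe_le_coe_iff.1 h3
          linarith
        · have hne : ¬ ((u l : EReal) = W.lo l) := by
            intro hc
            have := withExt_fullDim hT hWwe l
            rw [← hc, ← h2] at this
            exact lt_irrefl _ this
          have hvl : v l = -1 := by rw [hv]; simp only [if_neg hlj, if_neg hne, if_pos h2]
          have h3 := (hmem l).1
          simp only [hx] at h3
          rw [hel, hvl, ← h1] at h3
          have : u l ≤ u l + t * (-1) := EReal.coe_le_coe_iff.1 h3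
          linarith
    -- pigeonhole: a box containing `x t` for arbitrarily small `t > 0`
    have hcov : ∀ n : ℕ, ∃ B ∈ withExt 𝒯, B.mem (x (1/(n+1))) := fun n =>
      exists_mem_withExt hT _
    set g : ℕ → {B // B ∈ withExt 𝒯} := fun n =>
      ⟨(hcov n).choose, (hcov n).choose_spec.1⟩ with hg
    have gmem : ∀ n, (g n).1.mem (x (1/(n+1))) := fun n => (hcov n).choose_spec.2
    obtain ⟨B', hB'⟩ := Finite.exists_infinite_fiber g
    have hB'inf : (g ⁻¹' {B'}).Infinite := Set.infinite_coe_iff.1 hB'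
    have hsmall : ∀ ε : ℝ, 0 < ε → ∃ δ : ℝ, 0 < δ ∧ δ ≤ ε ∧ B'.1.mem (x δ) := by
      intro ε hε
      obtain ⟨N, hN⟩ := exists_nat_gt (1/ε)
      obtain ⟨n, hnS, hn⟩ := Set.Infinite.exists_gt hB'inf N
      refine ⟨1/(n+1), by positivity, ?_, ?_⟩
      · rw [div_le_iff₀ (by positivity)]
        have h1 : 1/ε < (n:ℝ) + 1 := by
          have : (N:ℝ) < (n:ℝ) + 1 := by exact_mod_cast Nat.lt_succ_of_lt hn
          linarith
        have := (div_lt_iff₀ hε).1 h1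
        linarith
      · have hgn : g n = B' := by simpa using hnS
        rw [← hgn]
        exact gmem n
    have hB'e : B'.1.mem e := by
      intro l
      constructor
      · apply ereal_le_of_small _ _ (v l)
        intro ε hε
        obtain ⟨δ, h1, h2, h3⟩ := hsmall ε hε
        exact ⟨δ, h1, h2, (h3 l).1⟩
      · apply ereal_ge_of_small _ _ (v l)
        intro ε hε
        obtain ⟨δ, h1, h2, h3⟩ := hsmall ε hε
        exact ⟨δ, h1, h2, (h3 l).2⟩
    have hB'F : B'.1 ∉ F := by
      intro hc
      obtain ⟨δ, h1, -, h3⟩ := hsmall 1 one_pos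
      exact hnot δ h1 B'.1 hc h3
    have hsub : insert B'.1 F ⊆ (withExt 𝒯).filter fun B => B.mem e := by
      intro B hB
      rcases Finset.mem_insert.1 hB with rfl | hB
      · exact Finset.mem_filter.2 ⟨B'.2, hB'e⟩
      · exact Finset.mem_filter.2 ⟨hFwe B hB, hmeme B hB⟩
    have hcard : F.card + 1 ≤ d + 1 := by
      have h1 : (insert B'.1 F).card = F.card + 1 := Finset.card_insert_of_notMem hB'F
      have h2 := Finset.card_le_card hsub
      have h3 := hP e
      omega
    omega

/-- Pigeonhole: some box of `T ∪ T_ext` contains `e` and points `e + δ·v` for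
arbitrarily small `δ > 0`. -/
lemma exists_box_small {𝒯 : Finset (Box d)} (hT : IsTiling 𝒯) (e v : Fin d → ℝ) :
    ∃ B ∈ withExt 𝒯, B.mem e ∧
      ∀ ε : ℝ, 0 < ε → ∃ δ : ℝ, 0 < δ ∧ δ ≤ ε ∧ B.mem (fun l => e l + δ * v l) := by
  classical
  have hcov : ∀ n : ℕ, ∃ B ∈ withExt 𝒯, B.mem (fun l => e l + (1/(n+1)) * v l) := fun n =>
    exists_mem_withExt hT _
  set g : ℕ → {B // B ∈ withExt 𝒯} := fun n =>
    ⟨(hcov n).choose, (hcov n).choose_spec.1⟩ with hg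
  have gmem : ∀ n, (g n).1.mem (fun l => e l + (1/(n+1)) * v l) := fun n =>
    (hcov n).choose_spec.2
  obtain ⟨B', hB'⟩ := Finite.exists_infinite_fiber g
  have hB'inf : (g ⁻¹' {B'}).Infinite := Set.infinite_coe_iff.1 hB'
  have hsmall : ∀ ε : ℝ, 0 < ε → ∃ δ : ℝ, 0 < δ ∧ δ ≤ ε ∧
      B'.1.mem (fun l => e l + δ * v l) := by
    intro ε hε
    obtain ⟨N, hN⟩ := exists_nat_gt (1/ε)
    obtain ⟨n, hnS, hn⟩ := Set.Infinite.exists_gt hB'inf N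
    refine ⟨1/(n+1), by positivity, ?_, ?_⟩
    · rw [div_le_iff₀ (by positivity)]
      have h1 : 1/ε < (n:ℝ) + 1 := by
        have : (N:ℝ) < (n:ℝ) + 1 := by exact_mod_cast Nat.lt_succ_of_lt hn
        linarith
      have := (div_lt_iff₀ hε).1 h1
      linarith
    · have hgn : g n = B' := by simpa using hnS
      rw [← hgn]
      exact gmem n
  refine ⟨B'.1, B'.2, ?_, hsmall⟩
  intro l
  constructor
  · apply ereal_le_of_small _ _ (v l)
    intro ε hε
    obtain ⟨δ, h1, h2, h3⟩ := hsmall ε hε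
    exact ⟨δ, h1, h2, (h3 l).1⟩
  · apply ereal_ge_of_small _ _ (v l)
    intro ε hε
    obtain ⟨δ, h1, h2, h3⟩ := hsmall ε hε
    exact ⟨δ, h1, h2, (h3 l).2⟩

/-- The orthants at `p` compatible with a box `B` (at `p`). -/
noncomputable def covSet (B : Box d) (p : Fin d → ℝ) : Finset (Fin d → Bool) :=
  Finset.univ.filter fun τ => ∀ l,
    ((p l : EReal) = B.lo l → τ l = true) ∧ ((p l : EReal) = B.hi l → τ l = false)

/-- Coordinates where `p` is interior to `B`. -/
noncomputable def zset (B : Box d) (p : Fin d → ℝ) : Finset (Fin d) :=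
  Finset.univ.filter fun l => B.lo l < (p l : EReal) ∧ (p l : EReal) < B.hi l

lemma mem_covSet_iff {B : Box d} {p : Fin d → ℝ} {τ : Fin d → Bool} :
    τ ∈ covSet B p ↔ ∀ l,
      ((p l : EReal) = B.lo l → τ l = true) ∧ ((p l : EReal) = B.hi l → τ l = false) := by
  simp [covSet]

lemma mem_zset_iff {B : Box d} {p : Fin d → ℝ} {l : Fin d} :
    l ∈ zset B p ↔ (B.lo l < (p l : EReal) ∧ (p l : EReal) < B.hi l) := by
  simp [zset]

/-- Every orthant at `p` is covered by some box of `T ∪ T_ext` containing `p`. -/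
lemma orthant_cover {𝒯 : Finset (Box d)} (hT : IsTiling 𝒯) (p : Fin d → ℝ)
    (τ : Fin d → Bool) : ∃ B ∈ withExt 𝒯, B.mem p ∧ τ ∈ covSet B p := by
  obtain ⟨B, hBwe, hBp, hBsmall⟩ :=
    exists_box_small hT p (fun l => if τ l then 1 else -1)
  refine ⟨B, hBwe, hBp, ?_⟩
  rw [mem_covSet_iff]
  refine fun l => ⟨?_, ?_⟩
  · intro hlo
    by_contra hτ
    have hτ' : τ l = false := by
      cases hll : τ l
      · rfl
      · exact absurd hll hτ
    obtain ⟨δ, hδ, -, hmem⟩ := hBsmall 1 one_pos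
    have := (hmem l).1
    rw [← hlo] at this
    have h2 : p l ≤ p l + δ * (if τ l then 1 else -1) := EReal.coe_le_coe_iff.1 this
    rw [hτ'] at h2
    simp only [Bool.false_eq_true, if_false] at h2
    linarith
  · intro hhi
    by_contra hτ
    have hτ' : τ l = true := by
      cases hll : τ l
      · exact absurd hll hτ
      · rfl
    obtain ⟨δ, hδ, -, hmem⟩ := hBsmall 1 one_pos
    have := (hmem l).2
    rw [← hhi] at this
    have h2 : p l + δ * (if τ l then 1 else -1) ≤ p l := EReal.coe_le_coe_iff.1 this
    rw [hτ'] at h2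
    simp only [if_true] at h2
    linarith

/-- Non-interior coordinates of a point of a full-dimensional box are endpoints. -/
lemma endpoint_of_not_interior {B : Box d} (hfd : B.FullDim) {p : Fin d → ℝ}
    (hmem : B.mem p) {l : Fin d} (h : l ∉ zset B p) :
    ((p l : EReal) = B.lo l ∧ (p l : EReal) ≠ B.hi l) ∨
    ((p l : EReal) = B.hi l ∧ (p l : EReal) ≠ B.lo l) := by
  rw [mem_zset_iff] at h
  push_neg at h
  rcases lt_or_eq_of_le (hmem l).1 with h1 | h1
  · right
    have h2 : (p l : EReal) = B.hi l := le_antisymm (hmem l).2 (h h1)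
    refine ⟨h2, fun hc => ?_⟩
    rw [← hc] at h1
    exact lt_irrefl _ h1
  · left
    refine ⟨h1.symm, fun hc => ?_⟩
    have := hfd l
    rw [h1, ← hc] at this
    exact lt_irrefl _ this

/-- The number of orthants covered by `B` at `p`. -/
lemma card_covSet {B : Box d} (hfd : B.FullDim) {p : Fin d → ℝ} (hmem : B.mem p) :
    (covSet B p).card = 2 ^ (zset B p).card := by
  classical
  have key : (covSet B p).card =
      (Finset.univ : Finset ({l // l ∈ zset B p} → Bool)).card := by
    apply Finset.card_nbij' (i := fun τ (l : {l // l ∈ zset B p}) => τ l.1)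
      (j := fun g l => if h : l ∈ zset B p then g ⟨l, h⟩ else decide ((p l : EReal) = B.lo l))
    · intro τ _
      exact Finset.mem_univ _
    · intro g _
      rw [Finset.mem_coe, mem_covSet_iff]
      refine fun l => ⟨?_, ?_⟩
      · intro hlo
        have hl : l ∉ zset B p := by
          rw [mem_zset_iff]
          rintro ⟨hc, -⟩
          rw [hlo] at hc
          exact lt_irrefl _ hc
        simp only [dif_neg hl]
        exact decide_eq_true hlo
      · intro hhi
        have hl : l ∉ zset B p := by
          rw [mem_zset_iff]
          rintro ⟨-, hc⟩
          rw [hhi] at hc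
          exact lt_irrefl _ hc
        simp only [dif_neg hl]
        have hne : (p l : EReal) ≠ B.lo l := by
          intro hc
          have := hfd l
          rw [← hc, ← hhi] at this
          exact lt_irrefl _ this
        exact decide_eq_false hne
    · intro τ hτ
      rw [Finset.mem_coe, mem_covSet_iff] at hτ
      funext l
      by_cases hl : l ∈ zset B p
      · simp only [dif_pos hl]
      · simp only [dif_neg hl]
        rcases endpoint_of_not_interior hfd hmem hl with ⟨h1, -⟩ | ⟨h1, h2⟩
        · rw [(hτ l).1 h1, decide_eq_true h1]
        · rw [(hτ l).2 h1, decide_eq_false h2]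
    · intro g _
      funext l
      simp only [dif_pos l.2]
  rw [key, Finset.card_univ, Fintype.card_fun, Fintype.card_coe, Fintype.card_bool]

/-- Distinct boxes containing `p` cover disjoint orthant sets. -/
lemma covSet_disjoint {𝒯 : Finset (Box d)} (hT : IsTiling 𝒯) {A B : Box d}
    (hA : A ∈ withExt 𝒯) (hB : B ∈ withExt 𝒯) (hAB : A ≠ B) {p : Fin d → ℝ}
    (hpA : A.mem p) (hpB : B.mem p) : Disjoint (covSet A p) (covSet B p) := by
  rw [Finset.disjoint_left]
  intro τ hτA hτB
  rw [mem_covSet_iff] at hτA hτB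
  obtain ⟨l, hl⟩ := exists_conflict hT hA hB hAB hpA hpB
  rcases hl with ⟨h1, h2⟩ | ⟨h1, h2⟩
  · have ha : τ l = false := (hτA l).2 h1
    have hb : τ l = true := (hτB l).1 h2
    rw [ha] at hb
    exact Bool.false_ne_true hb
  · have ha : τ l = true := (hτA l).1 h1
    have hb : τ l = false := (hτB l).2 h2
    rw [ha] at hb
    simp at hb

/-- The covered orthant counts add up to `2^d`. -/
lemma orthant_sum {𝒯 : Finset (Box d)} (hT : IsTiling 𝒯) (p : Fin d → ℝ) :
    ∑ B ∈ (withExt 𝒯).filter (fun B => B.mem p), 2 ^ (zset B p).card = 2 ^ d := by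
  classical
  set F := (withExt 𝒯).filter fun B => B.mem p with hF
  have hdisj : ∀ A ∈ F, ∀ B ∈ F, A ≠ B → Disjoint (covSet A p) (covSet B p) := by
    intro A hA B hB hAB
    rw [hF, Finset.mem_filter] at hA hB
    exact covSet_disjoint hT hA.1 hB.1 hAB hA.2 hB.2
  have hcover : F.biUnion (fun B => covSet B p) = Finset.univ := by
    apply Finset.eq_univ_of_forall
    intro τ
    obtain ⟨B, hBwe, hBp, hτ⟩ := orthant_cover hT p τ
    exact Finset.mem_biUnion.2 ⟨B, Finset.mem_filter.2 ⟨hBwe, hBp⟩, hτ⟩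
  have hcards := Finset.card_biUnion hdisj
  rw [hcover] at hcards
  have huniv : (Finset.univ : Finset (Fin d → Bool)).card = 2 ^ d := by
    rw [Finset.card_univ, Fintype.card_fun, Fintype.card_bool, Fintype.card_fin]
  rw [huniv] at hcards
  calc ∑ B ∈ F, 2 ^ (zset B p).card = ∑ B ∈ F, (covSet B p).card := by
        apply Finset.sum_congr rfl
        intro B hB
        rw [hF, Finset.mem_filter] at hB
        exact (card_covSet (withExt_fullDim hT hB.1) hB.2).symm
  _ = 2 ^ d := hcards.symm

lemma even_pow_sum (l : Multiset ℕ) (h : ∀ e ∈ l, 1 ≤ e) :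
    Even (l.map (fun e => 2 ^ e)).sum := by
  induction l using Multiset.induction_on with
  | empty => simp
  | cons a t ih =>
    rw [Multiset.map_cons, Multiset.sum_cons]
    refine Even.add ?_ (ih fun e he => h e (Multiset.mem_cons_of_mem he))
    have ha : 1 ≤ a := h a (Multiset.mem_cons_self a t)
    exact (Nat.even_pow).2 ⟨even_two, by omega⟩

lemma sum_pow_shift (l : Multiset ℕ) (h : ∀ e ∈ l, 1 ≤ e) :
    ((l.map (fun e => e - 1)).map (fun e => 2 ^ e)).sum * 2
      = (l.map (fun e => 2 ^ e)).sum := by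
  induction l using Multiset.induction_on with
  | empty => simp
  | cons a t ih =>
    simp only [Multiset.map_cons, Multiset.sum_cons]
    have ha : 1 ≤ a := h a (Multiset.mem_cons_self a t)
    have h2 : 2 ^ (a - 1) * 2 = 2 ^ a := by
      rw [← pow_succ]
      congr 1
      omega
    rw [add_mul, h2, ih (fun e he => h e (Multiset.mem_cons_of_mem he))]

/-- A multiset of at most `n-1` powers of two, each at most `2^(n-1)`, summing to
`2^n - 2`, must contain `2^(n-1)`. -/
lemma force_pow : ∀ k n : ℕ, ∀ l : Multiset ℕ, l.card = k → 2 ≤ n →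
    (∀ e ∈ l, e ≤ n - 1) → l.card ≤ n - 1 →
    (l.map (fun e => 2 ^ e)).sum = 2 ^ n - 2 → (n - 1) ∈ l := by
  intro k
  induction k using Nat.strong_induction_on with
  | _ k IH =>
    intro n l hlk hn hle hcard hsum
    have h2n : 4 ≤ 2 ^ n := by
      calc (4:ℕ) = 2 ^ 2 := by norm_num
      _ ≤ 2 ^ n := Nat.pow_le_pow_right (by norm_num) hn
    by_cases h0 : (0 : ℕ) ∈ l
    · set l₀ := l.erase 0 with hl₀
      have hl' : l = 0 ::ₘ l₀ := (Multiset.cons_erase h0).symm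
      by_cases h0' : (0 : ℕ) ∈ l₀
      · -- merge two zeros into a single 1
        set l₁ := l₀.erase 0 with hl₁
        have hl'' : l₀ = 0 ::ₘ l₁ := (Multiset.cons_erase h0').symm
        have hcl : l.card = l₁.card + 2 := by
          rw [hl', hl'', Multiset.card_cons, Multiset.card_cons]
        have hn3 : 3 ≤ n := by omega
        have hmem_l : ∀ e ∈ l₁, e ∈ l := by
          intro e he
          rw [hl', hl'']
          exact Multiset.mem_cons_of_mem (Multiset.mem_cons_of_mem he)
        have hsum' : ((1 ::ₘ l₁).map (fun e => 2 ^ e)).sum = 2 ^ n - 2 := by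
          rw [hl', hl''] at hsum
          simp only [Multiset.map_cons, Multiset.sum_cons, pow_zero] at hsum
          simp only [Multiset.map_cons, Multiset.sum_cons, pow_one]
          omega
        have hres := IH (l₁.card + 1) (by omega) n (1 ::ₘ l₁) (by
            rw [Multiset.card_cons]) hn
          (by
            intro e he
            rcases Multiset.mem_cons.1 he with rfl | he'
            · omega
            · exact hle e (hmem_l e he'))
          (by rw [Multiset.card_cons]; omega)
          hsum'
        rcases Multiset.mem_cons.1 hres with heq | hres'
        · omega
        · rw [hl', hl'']
          exact Multiset.mem_cons_of_mem (Multiset.mem_cons_of_mem hres')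
      · -- exactly one zero: parity contradiction
        exfalso
        have hall : ∀ e ∈ l₀, 1 ≤ e := by
          intro e he
          rcases Nat.eq_zero_or_pos e with rfl | h
          · exact absurd he h0'
          · exact h
        obtain ⟨a, ha⟩ := even_pow_sum l₀ hall
        rw [hl'] at hsum
        simp only [Multiset.map_cons, Multiset.sum_cons, pow_zero] at hsum
        obtain ⟨c, hc⟩ := (Nat.even_pow).2 ⟨even_two, (by omega : n ≠ 0)⟩
        omega
    · have hall : ∀ e ∈ l, 1 ≤ e := by
        intro e he
        rcases Nat.eq_zero_or_pos e with rfl | h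
        · exact absurd he h0
        · exact h
      rcases Nat.lt_or_ge n 3 with hn2 | hn3
      · -- n = 2
        have hn2' : n = 2 := by omega
        subst hn2'
        have hl0 : l ≠ 0 := by
          intro hc
          rw [hc] at hsum
          simp at hsum
        obtain ⟨e, he⟩ := Multiset.exists_mem_of_ne_zero hl0
        have h1 : e ≤ 1 := hle e he
        have h2 : 1 ≤ e := hall e he
        have : e = 1 := by omega
        rw [show (2:ℕ) - 1 = 1 from rfl, ← this]
        exact he
      · -- n ≥ 3: halve everything
        set l' := l.map (fun e => e - 1) with hl'def
        have hpow : 2 ^ n = 2 ^ (n - 1) * 2 := by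
          rw [← pow_succ]
          congr 1
          omega
        have h2n1 : 2 ≤ 2 ^ (n - 1) := by
          calc (2:ℕ) = 2 ^ 1 := by norm_num
          _ ≤ 2 ^ (n - 1) := Nat.pow_le_pow_right (by norm_num) (by omega)
        have hsum2 : (l'.map (fun e => 2 ^ e)).sum * 2 = 2 ^ n - 2 := by
          rw [hl'def, sum_pow_shift l hall, hsum]
        have hsum' : (l'.map (fun e => 2 ^ e)).sum = 2 ^ (n - 1) - 1 := by omega
        have h0' : (0 : ℕ) ∈ l' := by
          by_contra hc
          have hall' : ∀ e ∈ l', 1 ≤ e := by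
            intro e he
            rcases Nat.eq_zero_or_pos e with rfl | h
            · exact absurd he hc
            · exact h
          obtain ⟨a, ha⟩ := even_pow_sum l' hall'
          obtain ⟨c, hc⟩ := (Nat.even_pow).2 ⟨even_two, (by omega : n - 1 ≠ 0)⟩
          omega
        set l'' := l'.erase 0 with hl''def
        have hl'c : l' = 0 ::ₘ l'' := (Multiset.cons_erase h0').symm
        have hcards : l'.card = l.card := Multiset.card_map _ _
        have hc'' : l''.card = l.card - 1 := by
          rw [hl''def, Multiset.card_erase_of_mem h0', hcards]
          exact Nat.pred_eq_sub_one
        have hk1 : 1 ≤ k := by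
          have : l ≠ 0 := by
            intro hc
            rw [hl'def, hc] at h0'
            simp at h0'
          have := Multiset.card_pos.2 this
          omega
        have hsum'' : (l''.map (fun e => 2 ^ e)).sum = 2 ^ (n - 1) - 2 := by
          rw [hl'c] at hsum'
          simp only [Multiset.map_cons, Multiset.sum_cons, pow_zero] at hsum'
          omega
        have hres := IH (k - 1) (by omega) (n - 1) l'' (by omega) (by omega)
          (by
            intro e he
            have he' : e ∈ l' := Multiset.mem_of_mem_erase he
            obtain ⟨e₀, he₀, rfl⟩ := Multiset.mem_map.1 he'
            have := hle e₀ he₀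
            omega)
          (by omega)
          hsum''
        have hres' : n - 1 - 1 ∈ l' := Multiset.mem_of_mem_erase hres
        obtain ⟨e₀, he₀, heq⟩ := Multiset.mem_map.1 hres'
        have h1 : 1 ≤ e₀ := hall e₀ he₀
        have : e₀ = n - 1 := by omega
        rw [← this]
        exact he₀

/-- **Bridge box**: when two boxes touch oppositely at `p` in every coordinate
except `i`, some box at `p` is interior at every coordinate except `i`. -/
lemma exists_bridge {𝒯 : Finset (Box d)} (hT : IsTiling 𝒯) (hP : Proper 𝒯)
    (hd : 2 ≤ d) (p : Fin d → ℝ) (i : Fin d) {B B' : Box d}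
    (hB : B ∈ withExt 𝒯) (hB' : B' ∈ withExt 𝒯) (hBB' : B ≠ B')
    (hpB : B.mem p) (hpB' : B'.mem p)
    (hiB : (p i : EReal) = B.lo i ∨ (p i : EReal) = B.hi i)
    (hiB' : (p i : EReal) = B'.lo i ∨ (p i : EReal) = B'.hi i)
    (hopp : ∀ l, l ≠ i → ((p l : EReal) = B.lo l ∧ (p l : EReal) = B'.hi l) ∨
                         ((p l : EReal) = B.hi l ∧ (p l : EReal) = B'.lo l)) :
    ∃ N ∈ withExt 𝒯, N.mem p ∧ (∀ l, l ≠ i → l ∈ zset N p) ∧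
      ((p i : EReal) = N.lo i ∨ (p i : EReal) = N.hi i) ∧ N ≠ B ∧ N ≠ B' := by
  classical
  set F := (withExt 𝒯).filter (fun B => B.mem p) with hF
  have hBF : B ∈ F := Finset.mem_filter.2 ⟨hB, hpB⟩
  have hB'F : B' ∈ F := Finset.mem_filter.2 ⟨hB', hpB'⟩
  have hzempty : ∀ C : Box d, C.mem p →
      ((p i : EReal) = C.lo i ∨ (p i : EReal) = C.hi i) →
      (∀ l, l ≠ i → ((p l : EReal) = C.lo l ∨ (p l : EReal) = C.hi l)) →
      (zset C p).card = 0 := by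
    intro C _ hi hoth
    rw [Finset.card_eq_zero]
    rw [Finset.eq_empty_iff_forall_notMem]
    intro l hl
    rw [mem_zset_iff] at hl
    by_cases hli : l = i
    · subst hli
      rcases hi with h | h
      · rw [h] at hl
        exact lt_irrefl _ hl.1
      · rw [h] at hl
        exact lt_irrefl _ hl.2
    · rcases hoth l hli with h | h
      · rw [h] at hl
        exact lt_irrefl _ hl.1
      · rw [h] at hl
        exact lt_irrefl _ hl.2
  have hzB : (zset B p).card = 0 :=
    hzempty B hpB hiB (fun l hl => (hopp l hl).elim (fun h => Or.inl h.1) (fun h => Or.inr h.1))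
  have hzB' : (zset B' p).card = 0 :=
    hzempty B' hpB' hiB' (fun l hl => (hopp l hl).elim (fun h => Or.inr h.2) (fun h => Or.inl h.2))
  have hsum := orthant_sum hT p
  rw [← hF] at hsum
  set F' := (F.erase B).erase B' with hF'
  have hB'eB : B' ∈ F.erase B := Finset.mem_erase.2 ⟨Ne.symm hBB', hB'F⟩
  have hsplit1 : ∑ E ∈ F.erase B, 2 ^ (zset E p).card + 2 ^ (zset B p).card
      = ∑ E ∈ F, 2 ^ (zset E p).card := Finset.sum_erase_add _ _ hBF
  have hsplit2 : ∑ E ∈ F', 2 ^ (zset E p).card + 2 ^ (zset B' p).card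
      = ∑ E ∈ F.erase B, 2 ^ (zset E p).card := Finset.sum_erase_add _ _ hB'eB
  have h2d : 4 ≤ 2 ^ d := by
    calc (4:ℕ) = 2 ^ 2 := by norm_num
    _ ≤ 2 ^ d := Nat.pow_le_pow_right (by norm_num) hd
  have hS : ∑ E ∈ F', 2 ^ (zset E p).card = 2 ^ d - 2 := by
    rw [hzB] at hsplit1
    rw [hzB'] at hsplit2
    simp only [pow_zero] at hsplit1 hsplit2
    omega
  have hF'sub : ∀ E ∈ F', E ∈ F := by
    intro E hE
    exact Finset.mem_of_mem_erase (Finset.mem_of_mem_erase hE)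
  have hF'we : ∀ E ∈ F', E ∈ withExt 𝒯 := fun E hE => (Finset.mem_filter.1 (hF'sub E hE)).1
  have hF'p : ∀ E ∈ F', E.mem p := fun E hE => (Finset.mem_filter.1 (hF'sub E hE)).2
  have hF'neB : ∀ E ∈ F', E ≠ B := by
    intro E hE
    exact (Finset.mem_erase.1 (Finset.mem_of_mem_erase hE)).1
  have hF'neB' : ∀ E ∈ F', E ≠ B' := fun E hE => (Finset.mem_erase.1 hE).1
  have hzbound : ∀ E ∈ F', (zset E p).card ≤ d - 1 := by
    intro E hE
    have hle : (zset E p).card ≤ d := by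
      calc (zset E p).card ≤ (Finset.univ : Finset (Fin d)).card := Finset.card_le_card
            (Finset.subset_univ _)
      _ = d := by rw [Finset.card_univ, Fintype.card_fin]
    rcases Nat.lt_or_ge (zset E p).card d with h | h
    · omega
    · exfalso
      have hzu : zset E p = Finset.univ := Finset.eq_univ_of_card _ (by
        rw [Fintype.card_fin]
        omega)
      obtain ⟨l, hl⟩ := exists_conflict hT (hF'we E hE) hB (hF'neB E hE) (hF'p E hE) hpB
      have hlz : l ∈ zset E p := hzu ▸ Finset.mem_univ l
      rw [mem_zset_iff] at hlz
      rcases hl with ⟨h1, -⟩ | ⟨h1, -⟩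
      · rw [h1] at hlz
        exact lt_irrefl _ hlz.2
      · rw [h1] at hlz
        exact lt_irrefl _ hlz.1
  have hcardF : F.card ≤ d + 1 := hP p
  have hcardF' : F'.card = F.card - 2 := by
    rw [hF', Finset.card_erase_of_mem hB'eB, Finset.card_erase_of_mem hBF]
    omega
  -- apply the forcing lemma
  have hforce := force_pow (F'.val.map (fun E => (zset E p).card)).card d
    (F'.val.map (fun E => (zset E p).card)) rfl hd
    (by
      intro e he
      obtain ⟨E, hE, rfl⟩ := Multiset.mem_map.1 he
      exact hzbound E hE)
    (by
      rw [Multiset.card_map]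
      have : F'.card ≤ d - 1 := by omega
      exact this)
    (by
      rw [Multiset.map_map]
      have h := hS
      rw [Finset.sum] at h
      exact h)
  obtain ⟨E, hEF', hzE⟩ := Multiset.mem_map.1 hforce
  have hEF'' : E ∈ F' := hEF'
  -- the unique non-interior coordinate of E
  have hcompl : ((Finset.univ : Finset (Fin d)) \ zset E p).card = 1 := by
    rw [Finset.card_sdiff_of_subset (Finset.subset_univ _), Finset.card_univ, Fintype.card_fin, hzE]
    omega
  obtain ⟨ls, hls⟩ := Finset.card_eq_one.1 hcompl
  have hint : ∀ l, l ≠ ls → l ∈ zset E p := by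
    intro l hl
    by_contra hc
    have : l ∈ (Finset.univ : Finset (Fin d)) \ zset E p :=
      Finset.mem_sdiff.2 ⟨Finset.mem_univ _, hc⟩
    rw [hls, Finset.mem_singleton] at this
    exact hl this
  have hlsnot : ls ∉ zset E p := by
    intro hc
    have : ls ∈ (Finset.univ : Finset (Fin d)) \ zset E p := by
      rw [hls]
      exact Finset.mem_singleton_self _
    exact (Finset.mem_sdiff.1 this).2 hc
  have hconfl : ∀ C : Box d, C ∈ withExt 𝒯 → C.mem p → E ≠ C →
      ((p ls : EReal) = E.hi ls ∧ (p ls : EReal) = C.lo ls) ∨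
      ((p ls : EReal) = E.lo ls ∧ (p ls : EReal) = C.hi ls) := by
    intro C hCwe hCp hEC
    obtain ⟨l, hl⟩ := exists_conflict hT (hF'we E hEF'') hCwe hEC (hF'p E hEF'') hCp
    have hlls : l = ls := by
      by_contra hc
      have := hint l hc
      rw [mem_zset_iff] at this
      rcases hl with ⟨h1, -⟩ | ⟨h1, -⟩
      · rw [h1] at this
        exact lt_irrefl _ this.2
      · rw [h1] at this
        exact lt_irrefl _ this.1
    rw [hlls] at hl
    exact hl
  have hfdB := withExt_fullDim hT hB
  have hfdB' := withExt_fullDim hT hB'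
  have hfdE := withExt_fullDim hT (hF'we E hEF'')
  have hlsi : ls = i := by
    by_contra hc
    have hdB := hconfl B hB hpB (hF'neB E hEF'')
    have hdB' := hconfl B' hB' hpB' (hF'neB' E hEF'')
    have hob := hopp ls hc
    have contra : ∀ (X : Box d), X.FullDim →
        (p ls : EReal) = X.lo ls → (p ls : EReal) = X.hi ls → False := by
      intro X hXfd h1 h2
      have := hXfd ls
      rw [← h1, ← h2] at this
      exact lt_irrefl _ this
    rcases hdB with ⟨e1, b1⟩ | ⟨e1, b1⟩ <;> rcases hdB' with ⟨e2, b2⟩ | ⟨e2, b2⟩ <;>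
      rcases hob with ⟨o1, o2⟩ | ⟨o1, o2⟩
    · exact contra B' hfdB' b2 o2
    · exact contra B hfdB b1 o1
    · exact contra E hfdE e2 e1
    · exact contra B hfdB b1 o1
    · exact contra B hfdB o1 b1
    · exact contra E hfdE e1 e2
    · exact contra B hfdB o1 b1
    · exact contra B' hfdB' o2 b2
  refine ⟨E, hF'we E hEF'', hF'p E hEF'', ?_, ?_, hF'neB E hEF'', hF'neB' E hEF''⟩
  · intro l hl
    exact hint l (by rw [hlsi]; exact hl)
  · rw [← hlsi]
    rcases endpoint_of_not_interior hfdE (hF'p E hEF'') hlsnot with ⟨h1, -⟩ | ⟨h1, -⟩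
    · exact Or.inl h1
    · exact Or.inr h1

/-! ### Slice machinery -/

lemma box_ext {A B : Box d} (h1 : A.lo = B.lo) (h2 : A.hi = B.hi) : A = B := by
  cases A; cases B; cases h1; cases h2; rfl

lemma fullDim_interior_nonempty {B : Box d} (hfd : B.FullDim) :
    ∃ q : Fin d → ℝ, q ∈ B.interior := by
  choose c hc1 hc2 using fun m => exists_real_btwn (hfd m)
  exact ⟨c, fun m => ⟨hc1 m, hc2 m⟩⟩

lemma mem_insertNth_iff {B : Box (d+1)} {j : Fin (d+1)} {y : ℝ} {v : Fin d → ℝ} :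
    B.mem (j.insertNth y v) ↔
      (B.lo j ≤ (y : EReal) ∧ (y : EReal) ≤ B.hi j) ∧ (sliceBox B j).mem v := by
  unfold Box.mem
  rw [Fin.forall_iff_succAbove j]
  simp only [Fin.insertNth_apply_same, Fin.insertNth_apply_succAbove]
  exact Iff.rfl

lemma interior_insertNth_iff {B : Box (d+1)} {j : Fin (d+1)} {y : ℝ} {v : Fin d → ℝ} :
    (j.insertNth y v) ∈ B.interior ↔
      (B.lo j < (y : EReal) ∧ (y : EReal) < B.hi j) ∧ v ∈ (sliceBox B j).interior := by
  simp only [Box.interior, Set.mem_setOf_eq]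
  rw [Fin.forall_iff_succAbove j]
  simp only [Fin.insertNth_apply_same, Fin.insertNth_apply_succAbove]
  exact Iff.rfl

/-- Genericity extends from `𝒯` to `T ∪ T_ext` when `-1 < y < 1`. -/
lemma gen_withExt {𝒯 : Finset (Box (d+1))} {j : Fin (d+1)} {y : ℝ}
    (hy1 : -1 < y) (hy2 : y < 1)
    (hgen : ∀ B ∈ 𝒯, (y : EReal) ≠ B.lo j ∧ (y : EReal) ≠ B.hi j) :
    ∀ B ∈ withExt 𝒯, (y : EReal) ≠ B.lo j ∧ (y : EReal) ≠ B.hi j := by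
  intro B hB
  rcases Finset.mem_union.1 hB with h | h
  · exact hgen B h
  · simp only [extBoxes, Finset.mem_image] at h
    obtain ⟨⟨κ, s⟩, -, rfl⟩ := h
    have hne1 : (y : EReal) ≠ ((1:ℝ) : EReal) := by
      exact_mod_cast ne_of_lt hy2
    have hnem1 : (y : EReal) ≠ ((-1:ℝ) : EReal) := by
      exact_mod_cast ne_of_gt hy1
    rcases lt_trichotomy j κ with hlt | heq | hlt
    · rw [extBox_lo_of_lt hlt, extBox_hi_of_lt hlt]
      exact ⟨hnem1, hne1⟩
    · subst heq
      rw [extBox_lo_self, extBox_hi_self]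
      cases s
      · simp only [Bool.false_eq_true, if_false]
        exact ⟨fun hc => by simp at hc, hnem1⟩
      · simp only [if_true]
        exact ⟨hne1, fun hc => by simp at hc⟩
    · rw [extBox_lo_of_gt hlt, extBox_hi_of_gt hlt]
      exact ⟨fun hc => by simp at hc, fun hc => by simp at hc⟩

/-- Boxes containing a point of the generic hyperplane cross it strictly. -/
lemma crossing_at {𝒯 : Finset (Box (d+1))} {j : Fin (d+1)} {y : ℝ}
    (hy1 : -1 < y) (hy2 : y < 1)
    (hgen : ∀ B ∈ 𝒯, (y : EReal) ≠ B.lo j ∧ (y : EReal) ≠ B.hi j)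
    {B : Box (d+1)} (hB : B ∈ withExt 𝒯) {v : Fin d → ℝ}
    (hmem : B.mem (j.insertNth y v)) :
    B.lo j < (y : EReal) ∧ (y : EReal) < B.hi j := by
  obtain ⟨⟨h1, h2⟩, -⟩ := mem_insertNth_iff.1 hmem
  obtain ⟨hg1, hg2⟩ := gen_withExt hy1 hy2 hgen B hB
  exact ⟨lt_of_le_of_ne h1 (Ne.symm hg1), lt_of_le_of_ne h2 hg2⟩

lemma slice_fullDim {B : Box (d+1)} {j : Fin (d+1)} (hfd : B.FullDim) :
    (sliceBox B j).FullDim := fun l => hfd _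

/-- Distinct strictly-crossing boxes have distinct slices. -/
lemma slice_inj {𝒯 : Finset (Box (d+1))} (hT : IsTiling 𝒯) {j : Fin (d+1)} {y : ℝ}
    {B₁ B₂ : Box (d+1)} (h₁ : B₁ ∈ withExt 𝒯) (h₂ : B₂ ∈ withExt 𝒯)
    (hc₁ : B₁.lo j < (y : EReal) ∧ (y : EReal) < B₁.hi j)
    (hc₂ : B₂.lo j < (y : EReal) ∧ (y : EReal) < B₂.hi j)
    (heq : sliceBox B₁ j = sliceBox B₂ j) : B₁ = B₂ := by
  by_contra hne
  obtain ⟨v, hv⟩ := fullDim_interior_nonempty (slice_fullDim (j := j) (withExt_fullDim hT h₁))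
  have hu₁ : (j.insertNth y v) ∈ B₁.interior := interior_insertNth_iff.2 ⟨hc₁, hv⟩
  have hu₂ : (j.insertNth y v) ∈ B₂.interior := by
    refine interior_insertNth_iff.2 ⟨hc₂, ?_⟩
    rw [← heq]
    exact hv
  have hd := interior_disjoint hT h₁ h₂ hne
  have : (j.insertNth y v) ∈ B₁.interior ∩ B₂.interior := ⟨hu₁, hu₂⟩
  rw [hd] at this
  exact this

/-- The slice of an exterior box is an exterior box. -/
lemma slice_ext_eq {j : Fin (d+1)} (k : Fin d) (s : Bool) :
    sliceBox (extBox (d+1) (j.succAbove k) s) j = extBox d k s := by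
  apply box_ext <;> funext l
  · show (extBox (d+1) (j.succAbove k) s).lo (j.succAbove l) = (extBox d k s).lo l
    rcases lt_trichotomy l k with h | h | h
    · rw [extBox_lo_of_lt (Fin.succAbove_lt_succAbove_iff.2 h), extBox_lo_of_lt h]
    · subst h
      rw [extBox_lo_self, extBox_lo_self]
    · rw [extBox_lo_of_gt (Fin.succAbove_lt_succAbove_iff.2 h), extBox_lo_of_gt h]
  · show (extBox (d+1) (j.succAbove k) s).hi (j.succAbove l) = (extBox d k s).hi l
    rcases lt_trichotomy l k with h | h | h
    · rw [extBox_hi_of_lt (Fin.succAbove_lt_succAbove_iff.2 h), extBox_hi_of_lt h]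
    · subst h
      rw [extBox_hi_self, extBox_hi_self]
    · rw [extBox_hi_of_gt (Fin.succAbove_lt_succAbove_iff.2 h), extBox_hi_of_gt h]

lemma ext_crossing {j : Fin (d+1)} (k : Fin d) (s : Bool) {y : ℝ}
    (hy1 : -1 < y) (hy2 : y < 1) :
    (extBox (d+1) (j.succAbove k) s).lo j < (y : EReal) ∧
      (y : EReal) < (extBox (d+1) (j.succAbove k) s).hi j := by
  rcases lt_or_gt_of_ne (Fin.ne_succAbove j k) with h | h
  · rw [extBox_lo_of_lt h, extBox_hi_of_lt h]
    exact ⟨by exact_mod_cast hy1, by exact_mod_cast hy2⟩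
  · rw [extBox_lo_of_gt h, extBox_hi_of_gt h]
    exact ⟨bot_lt_iff_ne_bot.2 (EReal.coe_ne_bot _), lt_top_iff_ne_top.2 (EReal.coe_ne_top _)⟩

lemma slice_mem_sliceT {𝒯 : Finset (Box (d+1))} {j : Fin (d+1)} {y : ℝ} {B : Box (d+1)}
    (hB : B ∈ 𝒯) (h1 : B.lo j ≤ (y : EReal)) (h2 : (y : EReal) ≤ B.hi j) :
    sliceBox B j ∈ sliceT 𝒯 j y :=
  Finset.mem_image.2 ⟨B, Finset.mem_filter.2 ⟨hB, h1, h2⟩, rfl⟩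

/-- Every box of the sliced tiling (with its exterior boxes) is the slice of a
strictly-crossing box of `T ∪ T_ext`. -/
lemma slice_rep {𝒯 : Finset (Box (d+1))} {j : Fin (d+1)} {y : ℝ}
    (hy1 : -1 < y) (hy2 : y < 1)
    (hgen : ∀ B ∈ 𝒯, (y : EReal) ≠ B.lo j ∧ (y : EReal) ≠ B.hi j)
    {C : Box d} (hC : C ∈ withExt (sliceT 𝒯 j y)) :
    ∃ B ∈ withExt 𝒯, (B.lo j < (y : EReal) ∧ (y : EReal) < B.hi j) ∧ sliceBox B j = C := by
  rcases Finset.mem_union.1 hC with h | h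
  · simp only [sliceT, Finset.mem_image, Finset.mem_filter] at h
    obtain ⟨B, ⟨hB, h1, h2⟩, rfl⟩ := h
    refine ⟨B, Finset.mem_union_left _ hB, ⟨?_, ?_⟩, rfl⟩
    · exact lt_of_le_of_ne h1 (Ne.symm (hgen B hB).1)
    · exact lt_of_le_of_ne h2 (hgen B hB).2
  · simp only [extBoxes, Finset.mem_image] at h
    obtain ⟨⟨k, s⟩, -, rfl⟩ := h
    exact ⟨extBox (d+1) (j.succAbove k) s,
      Finset.mem_union_right _ (extBox_mem_extBoxes _ _),
      ext_crossing k s hy1 hy2, slice_ext_eq k s⟩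

/-- The slice of a proper tiling at a generic hyperplane is a tiling. -/
lemma sliceT_isTiling {𝒯 : Finset (Box (d+1))} (hT : IsTiling 𝒯) {j : Fin (d+1)} {y : ℝ}
    (hy1 : -1 < y) (hy2 : y < 1)
    (hgen : ∀ B ∈ 𝒯, (y : EReal) ≠ B.lo j ∧ (y : EReal) ≠ B.hi j) :
    IsTiling (sliceT 𝒯 j y) := by
  refine ⟨?_, ?_, ?_, ?_⟩
  · intro C hC
    simp only [sliceT, Finset.mem_image, Finset.mem_filter] at hC
    obtain ⟨B, ⟨hB, -, -⟩, rfl⟩ := hC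
    exact slice_fullDim (hT.1 B hB)
  · intro C hC v hv
    simp only [sliceT, Finset.mem_image, Finset.mem_filter] at hC
    obtain ⟨B, ⟨hB, h1, h2⟩, rfl⟩ := hC
    have hu : B.mem (j.insertNth y v) := mem_insertNth_iff.2 ⟨⟨h1, h2⟩, hv⟩
    have hcube := hT.2.1 B hB hu
    intro l
    have := hcube (j.succAbove l)
    rwa [Fin.insertNth_apply_succAbove] at this
  · intro A' hA' B' hB' hne
    simp only [sliceT, Finset.mem_image, Finset.mem_filter] at hA' hB'
    obtain ⟨A, ⟨hA, hA1, hA2⟩, rfl⟩ := hA'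
    obtain ⟨B, ⟨hB, hB1, hB2⟩, rfl⟩ := hB'
    have hAB : A ≠ B := fun hc => hne (by rw [hc])
    ext v
    simp only [Set.mem_inter_iff, Set.mem_empty_iff_false, iff_false, not_and]
    intro hvA hvB
    have hcA : A.lo j < (y:EReal) ∧ (y:EReal) < A.hi j :=
      ⟨lt_of_le_of_ne hA1 (Ne.symm (hgen A hA).1), lt_of_le_of_ne hA2 (hgen A hA).2⟩
    have hcB : B.lo j < (y:EReal) ∧ (y:EReal) < B.hi j :=
      ⟨lt_of_le_of_ne hB1 (Ne.symm (hgen B hB).1), lt_of_le_of_ne hB2 (hgen B hB).2⟩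
    have h1 : (j.insertNth y v) ∈ A.interior := interior_insertNth_iff.2 ⟨hcA, hvA⟩
    have h2 : (j.insertNth y v) ∈ B.interior := interior_insertNth_iff.2 ⟨hcB, hvB⟩
    have hd := hT.2.2.1 A hA B hB hAB
    have : (j.insertNth y v) ∈ A.interior ∩ B.interior := ⟨h1, h2⟩
    rw [hd] at this
    exact this
  · intro v hv
    have hu : (j.insertNth y v) ∈ cube (d+1) := by
      intro m
      rcases eq_or_ne m j with rfl | hm
      · rw [Fin.insertNth_apply_same]
        exact ⟨hy1.le, hy2.le⟩
      · obtain ⟨l, rfl⟩ := Fin.exists_succAbove_eq hm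
        rw [Fin.insertNth_apply_succAbove]
        exact hv l
    obtain ⟨B, hB, hmem⟩ := hT.2.2.2 _ hu
    obtain ⟨⟨h1, h2⟩, h3⟩ := mem_insertNth_iff.1 hmem
    exact ⟨sliceBox B j, slice_mem_sliceT hB h1 h2, h3⟩

/-- The slice of a proper tiling at a generic hyperplane is proper. -/
lemma sliceT_proper {𝒯 : Finset (Box (d+1))} (hT : IsTiling 𝒯) (hP : Proper 𝒯)
    {j : Fin (d+1)} {y : ℝ} (hy1 : -1 < y) (hy2 : y < 1)
    (hgen : ∀ B ∈ 𝒯, (y : EReal) ≠ B.lo j ∧ (y : EReal) ≠ B.hi j) :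
    Proper (sliceT 𝒯 j y) := by
  classical
  intro v
  set u : Fin (d+1) → ℝ := j.insertNth y v with hu
  set φ : Box d → Box (d+1) := fun C =>
    if h : ∃ B, B ∈ withExt 𝒯 ∧ ((B.lo j < (y:EReal) ∧ (y:EReal) < B.hi j) ∧ sliceBox B j = C)
    then h.choose else ⟨fun _ => (0:EReal), fun _ => (0:EReal)⟩ with hφ
  have hrep : ∀ C ∈ (withExt (sliceT 𝒯 j y)).filter (fun C => C.mem v),
      ∃ B, B ∈ withExt 𝒯 ∧ ((B.lo j < (y:EReal) ∧ (y:EReal) < B.hi j) ∧ sliceBox B j = C) := by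
    intro C hC
    obtain ⟨B, h1, h2, h3⟩ := slice_rep hy1 hy2 hgen (Finset.mem_filter.1 hC).1
    exact ⟨B, h1, h2, h3⟩
  have hmaps : ∀ C ∈ (withExt (sliceT 𝒯 j y)).filter (fun C => C.mem v),
      φ C ∈ (withExt 𝒯).filter (fun B => B.mem u) := by
    intro C hC
    have h := hrep C hC
    rw [hφ]
    simp only [dif_pos h]
    obtain ⟨hwe, hcr, hsl⟩ := h.choose_spec
    refine Finset.mem_filter.2 ⟨hwe, ?_⟩
    rw [hu]
    refine mem_insertNth_iff.2 ⟨⟨hcr.1.le, hcr.2.le⟩, ?_⟩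
    rw [hsl]
    exact (Finset.mem_filter.1 hC).2
  have hinj : Set.InjOn φ ((withExt (sliceT 𝒯 j y)).filter (fun C => C.mem v)) := by
    intro C₁ hC₁ C₂ hC₂ heq
    have h₁ := hrep C₁ (Finset.mem_coe.1 hC₁)
    have h₂ := hrep C₂ (Finset.mem_coe.1 hC₂)
    have e₁ := h₁.choose_spec
    have e₂ := h₂.choose_spec
    rw [hφ] at heq
    simp only [dif_pos h₁, dif_pos h₂] at heq
    rw [← e₁.2.2, ← e₂.2.2, heq]
  have hcard := Finset.card_le_card_of_injOn φ hmaps hinj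
  have hcount := crossing_count hT hP u j (by
    intro B hB hm
    have hj : u j = y := by rw [hu, Fin.insertNth_apply_same]
    rw [hj]
    rw [hu] at hm
    exact crossing_at hy1 hy2 hgen hB hm)
  exact le_trans hcard hcount

/-- Slicing commutes with taking sides (in a non-sliced coordinate). -/
lemma slice_side_comm {B : Box (d+1)} {j : Fin (d+1)} (k : Fin d) (s : Bool) :
    sliceBox (sideBox B (j.succAbove k) s) j = sideBox (sliceBox B j) k s := by
  apply box_ext <;> funext l
  · show (sideBox B (j.succAbove k) s).lo (j.succAbove l) = (sideBox (sliceBox B j) k s).lo l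
    by_cases h : l = k
    · subst h
      simp only [sideBox, if_pos rfl]
      rfl
    · have h' : j.succAbove l ≠ j.succAbove k := fun hc =>
        h (Fin.succAbove_right_injective hc)
      simp only [sideBox, if_neg h', if_neg h]
      rfl
  · show (sideBox B (j.succAbove k) s).hi (j.succAbove l) = (sideBox (sliceBox B j) k s).hi l
    by_cases h : l = k
    · subst h
      simp only [sideBox, if_pos rfl]
      rfl
    · have h' : j.succAbove l ≠ j.succAbove k := fun hc =>
        h (Fin.succAbove_right_injective hc)
      simp only [sideBox, if_neg h', if_neg h]
      rfl

/-- `interDim` splits along a distinguished coordinate. -/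
lemma interDim_succAbove (X Y : Box (d+1)) (j : Fin (d+1)) :
    interDim X Y = (if max (X.lo j) (Y.lo j) < min (X.hi j) (Y.hi j) then 1 else 0)
      + interDim (sliceBox X j) (sliceBox Y j) := by
  rw [interDim, interDim, Finset.card_filter, Finset.card_filter,
    Fin.sum_univ_succAbove _ j]
  rfl

/-! ### Sides: basic utilities -/

lemma mem_toSet {B : Box d} {p : Fin d → ℝ} : p ∈ B.toSet ↔ B.mem p := Iff.rfl

lemma sideBox_lo_self (B : Box d) (i : Fin d) (s : Bool) :
    (sideBox B i s).lo i = (if s then B.hi i else B.lo i) := if_pos rfl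

lemma sideBox_hi_self (B : Box d) (i : Fin d) (s : Bool) :
    (sideBox B i s).hi i = (if s then B.hi i else B.lo i) := if_pos rfl

lemma sideBox_lo_ne (B : Box d) {i l : Fin d} (h : l ≠ i) (s : Bool) :
    (sideBox B i s).lo l = B.lo l := if_neg h

lemma sideBox_hi_ne (B : Box d) {i l : Fin d} (h : l ≠ i) (s : Bool) :
    (sideBox B i s).hi l = B.hi l := if_neg h

lemma sideBox_mem_sides {𝒯 : Finset (Box d)} {B : Box d} (hB : B ∈ withExt 𝒯)
    (i : Fin d) (s : Bool) : sideBox B i s ∈ sides 𝒯 := by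
  simp only [sides, Finset.mem_image]
  exact ⟨(B, (i, s)), Finset.mem_product.2 ⟨hB, Finset.mem_univ _⟩, rfl⟩

lemma mem_sideBox_iff {B : Box d} {i : Fin d} {s : Bool} {p : Fin d → ℝ} :
    (sideBox B i s).mem p ↔ ((p i : EReal) = (if s then B.hi i else B.lo i)) ∧
      (∀ l, l ≠ i → (B.lo l ≤ (p l : EReal) ∧ (p l : EReal) ≤ B.hi l)) := by
  constructor
  · intro h
    refine ⟨?_, fun l hl => ?_⟩
    · have := h i
      rw [sideBox_lo_self, sideBox_hi_self] at this
      exact le_antisymm this.2 this.1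
    · have := h l
      rwa [sideBox_lo_ne B hl, sideBox_hi_ne B hl] at this
  · rintro ⟨h1, h2⟩ l
    by_cases hl : l = i
    · subst hl
      rw [sideBox_lo_self, sideBox_hi_self, ← h1]
      exact ⟨le_refl _, le_refl _⟩
    · rw [sideBox_lo_ne B hl, sideBox_hi_ne B hl]
      exact h2 l hl

/-- Representation of a side which is degenerate at `(i, x)`. -/
lemma side_rep {𝒯 : Finset (Box d)} (hT : IsTiling 𝒯) {S : Box d} (hS : S ∈ sides 𝒯)
    {i : Fin d} {x : ℝ} (hdeg : DegenAt S i x) :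
    ∃ B, B ∈ withExt 𝒯 ∧ ∃ s : Bool, S = sideBox B i s ∧
      (if s then B.hi i else B.lo i) = (x : EReal) := by
  simp only [sides, Finset.mem_image] at hS
  obtain ⟨⟨B, m, s⟩, hq, rfl⟩ := hS
  have hBwe : B ∈ withExt 𝒯 := (Finset.mem_product.1 hq).1
  have hfd := withExt_fullDim hT hBwe
  by_cases him : i = m
  · subst him
    refine ⟨B, hBwe, s, rfl, ?_⟩
    have := hdeg.1
    rw [sideBox_lo_self] at this
    exact this
  · exfalso
    have h1 := hdeg.1
    have h2 := hdeg.2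
    rw [sideBox_lo_ne B him] at h1
    rw [sideBox_hi_ne B him] at h2
    have := hfd i
    rw [h1, h2] at this
    exact lt_irrefl _ this

/-- `interDim` of two boxes whose intersection is degenerate exactly at `i`. -/
lemma interDim_eq_of {X Y : Box d} (i : Fin d)
    (hdeg : ¬ (max (X.lo i) (Y.lo i) < min (X.hi i) (Y.hi i)))
    (hnd : ∀ l, l ≠ i → max (X.lo l) (Y.lo l) < min (X.hi l) (Y.hi l)) :
    interDim X Y = d - 1 := by
  rw [interDim]
  have heq : (Finset.univ.filter fun l =>
      max (X.lo l) (Y.lo l) < min (X.hi l) (Y.hi l)) = Finset.univ.erase i := by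
    ext l
    simp only [Finset.mem_filter, Finset.mem_erase, Finset.mem_univ, true_and, and_true]
    constructor
    · intro h
      rintro rfl
      exact hdeg h
    · exact hnd l
  rw [heq, Finset.card_erase_of_mem (Finset.mem_univ _), Finset.card_univ, Fintype.card_fin]

lemma max_lt_min_of_interior {B N : Box d} (hfdB : B.FullDim) {p : Fin d → ℝ} {l : Fin d}
    (hB : B.lo l ≤ (p l : EReal) ∧ (p l : EReal) ≤ B.hi l)
    (hN : N.lo l < (p l : EReal) ∧ (p l : EReal) < N.hi l) :
    max (B.lo l) (N.lo l) < min (B.hi l) (N.hi l) := by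
  rcases lt_or_eq_of_le hB.1 with h1 | h1
  · exact lt_of_lt_of_le (max_lt h1 hN.1) (le_min hB.2 hN.2.le)
  · have h2 : (p l : EReal) < B.hi l := by
      have := hfdB l
      rwa [h1] at this
    exact lt_of_le_of_lt (max_le (le_of_eq h1) hN.1.le) (lt_min h2 hN.2)

lemma linked_symm {A B : Box d} (h : Linked A B) : Linked B A := by
  obtain ⟨h1, h2⟩ := h
  constructor
  · obtain ⟨q, hq1, hq2⟩ := h1
    exact ⟨q, hq2, hq1⟩
  · rw [← h2, interDim, interDim]
    congr 1
    apply Finset.filter_congr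
    intro l _
    rw [max_comm, min_comm]

lemma linkRel_symm {𝒯 : Finset (Box d)} {A B : Box d} (h : linkRel 𝒯 A B) :
    linkRel 𝒯 B A := ⟨h.2.1, h.1, linked_symm h.2.2⟩

/-! ### The star side (for pairs of exterior sides) -/

lemma ext_star_link_aux {dd : ℕ} (𝒯 : Finset (Box dd)) {κ : Fin dd} {sκ : Bool} {i : Fin dd}
    {s₀ : Bool} {x : ℝ} (hik : i ≤ κ)
    (hval : (if s₀ then (extBox dd κ sκ).hi i else (extBox dd κ sκ).lo i) = (x : EReal))
    {sE sS : Bool}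
    (hstar : (if sS then (extBox dd i sE).hi i else (extBox dd i sE).lo i) = (x : EReal)) :
    linkRel 𝒯 (sideBox (extBox dd κ sκ) i s₀) (sideBox (extBox dd i sE) i sS) := by
  have hmemE : ∀ (l : Fin dd), l ≠ i →
      (extBox dd κ sκ).lo l ≤ ((if l = κ then (if sκ then (2:ℝ) else -2) else 0 : ℝ) : EReal) ∧
      ((if l = κ then (if sκ then (2:ℝ) else -2) else 0 : ℝ) : EReal) ≤ (extBox dd κ sκ).hi l := by
    intro l hl
    rcases lt_trichotomy l κ with hlt | heq | hlt
    · rw [extBox_lo_of_lt hlt, extBox_hi_of_lt hlt, if_neg (ne_of_lt hlt)]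
      exact ⟨by exact_mod_cast (by norm_num : (-1:ℝ) ≤ 0),
        by exact_mod_cast (by norm_num : (0:ℝ) ≤ 1)⟩
    · subst heq
      rw [extBox_lo_self, extBox_hi_self, if_pos rfl]
      cases sκ
      · simp only [Bool.false_eq_true, if_false]
        exact ⟨bot_le, by exact_mod_cast (by norm_num : (-2:ℝ) ≤ -1)⟩
      · simp only [if_true]
        exact ⟨by exact_mod_cast (by norm_num : (1:ℝ) ≤ 2), le_top⟩
    · rw [extBox_lo_of_gt hlt, extBox_hi_of_gt hlt]
      exact ⟨bot_le, le_top⟩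
  refine ⟨sideBox_mem_sides (Finset.mem_union_right _ (extBox_mem_extBoxes κ sκ)) i s₀,
    sideBox_mem_sides (Finset.mem_union_right _ (extBox_mem_extBoxes i sE)) i sS, ?_, ?_⟩
  · -- Intersects
    set q : Fin dd → ℝ :=
      fun m => if m = i then x else if m = κ then (if sκ then 2 else -2) else 0 with hq
    have hqi : q i = x := by rw [hq]; simp
    have hqne : ∀ l, l ≠ i → q l = (if l = κ then (if sκ then (2:ℝ) else -2) else 0) := by
      intro l hl
      rw [hq]
      simp [hl]
    refine ⟨q, ?_, ?_⟩
    · rw [mem_toSet, mem_sideBox_iff]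
      refine ⟨by rw [hqi, hval], fun l hl => ?_⟩
      rw [hqne l hl]
      exact hmemE l hl
    · rw [mem_toSet, mem_sideBox_iff]
      refine ⟨by rw [hqi, hstar], fun l hl => ?_⟩
      rcases lt_trichotomy l i with hlt | heq | hlt
      · rw [extBox_lo_of_lt hlt, extBox_hi_of_lt hlt]
        have hql : q l = 0 := by
          rw [hqne l hl, if_neg]
          intro hc
          subst hc
          exact absurd hik (not_le_of_gt hlt)
        rw [hql]
        exact ⟨by exact_mod_cast (by norm_num : (-1:ℝ) ≤ 0),
          by exact_mod_cast (by norm_num : (0:ℝ) ≤ 1)⟩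
      · exact absurd heq hl
      · rw [extBox_lo_of_gt hlt, extBox_hi_of_gt hlt]
        exact ⟨bot_le, le_top⟩
  · -- interDim = dd - 1
    apply interDim_eq_of i
    · rw [sideBox_lo_self, sideBox_lo_self, sideBox_hi_self, sideBox_hi_self, hval, hstar]
      simp
    · intro l hl
      rw [sideBox_lo_ne _ hl, sideBox_lo_ne _ hl, sideBox_hi_ne _ hl, sideBox_hi_ne _ hl]
      rcases lt_trichotomy l i with hlt | heq | hlt
      · have hlκ : l < κ := lt_of_lt_of_le hlt hik
        rw [extBox_lo_of_lt hlt, extBox_hi_of_lt hlt, extBox_lo_of_lt hlκ, extBox_hi_of_lt hlκ]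
        simp only [max_self, min_self]
        exact_mod_cast (by norm_num : (-1:ℝ) < 1)
      · exact absurd heq hl
      · rw [extBox_lo_of_gt hlt, extBox_hi_of_gt hlt]
        have h1 : max ((extBox dd κ sκ).lo l) ⊥ = (extBox dd κ sκ).lo l := max_eq_left bot_le
        have h2 : min ((extBox dd κ sκ).hi l) ⊤ = (extBox dd κ sκ).hi l := min_eq_left le_top
        rw [h1, h2]
        exact extBox_fullDim κ sκ l

/-- Two exterior sides degenerate at the same `(i, x)` are connected. -/
lemma ext_ext_connect {dd : ℕ} (𝒯 : Finset (Box dd)) {κ κ' : Fin dd} {sκ sκ' : Bool}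
    {i : Fin dd} {s₀ s₀' : Bool} {x : ℝ}
    (hval : (if s₀ then (extBox dd κ sκ).hi i else (extBox dd κ sκ).lo i) = (x : EReal))
    (hval' : (if s₀' then (extBox dd κ' sκ').hi i else (extBox dd κ' sκ').lo i) = (x : EReal)) :
    Relation.ReflTransGen (linkRel 𝒯)
      (sideBox (extBox dd κ sκ) i s₀) (sideBox (extBox dd κ' sκ') i s₀') := by
  -- i ≤ κ and x = ±1
  have hshape : ∀ (κ₁ : Fin dd) (sκ₁ s₁ : Bool),
      (if s₁ then (extBox dd κ₁ sκ₁).hi i else (extBox dd κ₁ sκ₁).lo i) = (x : EReal) →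
      i ≤ κ₁ ∧ (x = 1 ∨ x = -1) := by
    intro κ₁ sκ₁ s₁ hv
    rcases lt_trichotomy i κ₁ with h | h | h
    · refine ⟨h.le, ?_⟩
      cases s₁
      · simp only [Bool.false_eq_true, if_false, extBox_lo_of_lt h] at hv
        right
        exact_mod_cast hv.symm
      · simp only [if_true, extBox_hi_of_lt h] at hv
        left
        exact_mod_cast hv.symm
    · refine ⟨h.le, ?_⟩
      subst h
      cases s₁ <;> cases sκ₁
      · rw [extBox_lo_self] at hv
        simp only [Bool.false_eq_true, if_false] at hv
        exact absurd hv (by simp)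
      · rw [extBox_lo_self] at hv
        simp only [Bool.false_eq_true, if_false, if_true] at hv
        left
        exact_mod_cast hv.symm
      · rw [extBox_hi_self] at hv
        simp only [Bool.false_eq_true, if_false, if_true] at hv
        right
        exact_mod_cast hv.symm
      · rw [extBox_hi_self] at hv
        simp only [if_true] at hv
        exact absurd hv (by simp)
    · exfalso
      cases s₁
      · simp only [Bool.false_eq_true, if_false, extBox_lo_of_gt h] at hv
        exact absurd hv (by simp)
      · simp only [if_true, extBox_hi_of_gt h] at hv
        exact absurd hv (by simp)
  obtain ⟨hik, hx⟩ := hshape κ sκ s₀ hval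
  obtain ⟨hik', -⟩ := hshape κ' sκ' s₀' hval'
  have hstar : ∃ (sE sS : Bool),
      (if sS then (extBox dd i sE).hi i else (extBox dd i sE).lo i) = (x : EReal) := by
    rcases hx with rfl | rfl
    · refine ⟨true, false, ?_⟩
      rw [extBox_lo_self]
      simp
    · refine ⟨false, true, ?_⟩
      rw [extBox_hi_self]
      simp
  obtain ⟨sE, sS, hstar⟩ := hstar
  exact Relation.ReflTransGen.tail
    (Relation.ReflTransGen.single (ext_star_link_aux 𝒯 hik hval hstar))
    (linkRel_symm (ext_star_link_aux 𝒯 hik' hval' hstar))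

/-! ### Lifting chains through a slice -/

def Lifts (𝒯 : Finset (Box (d+1))) (j : Fin (d+1)) (y : ℝ) (C : Box d) (L : Box (d+1)) :
    Prop :=
  ∃ B, B ∈ withExt 𝒯 ∧ (B.lo j < (y : EReal) ∧ (y : EReal) < B.hi j) ∧
    ∃ (k : Fin d) (s : Bool), L = sideBox B (j.succAbove k) s ∧
      C = sideBox (sliceBox B j) k s

lemma lifts_slice {𝒯 : Finset (Box (d+1))} {j : Fin (d+1)} {y : ℝ} {C : Box d}
    {L : Box (d+1)} (h : Lifts 𝒯 j y C L) : sliceBox L j = C := by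
  obtain ⟨B, -, -, k, s, rfl, rfl⟩ := h
  exact slice_side_comm k s

lemma lifts_crossing {𝒯 : Finset (Box (d+1))} {j : Fin (d+1)} {y : ℝ} {C : Box d}
    {L : Box (d+1)} (h : Lifts 𝒯 j y C L) :
    L.lo j < (y : EReal) ∧ (y : EReal) < L.hi j := by
  obtain ⟨B, -, hcr, k, s, rfl, -⟩ := h
  rw [sideBox_lo_ne B (Fin.ne_succAbove j k) s, sideBox_hi_ne B (Fin.ne_succAbove j k) s]
  exact hcr

lemma lifts_sides {𝒯 : Finset (Box (d+1))} {j : Fin (d+1)} {y : ℝ} {C : Box d}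
    {L : Box (d+1)} (h : Lifts 𝒯 j y C L) : L ∈ sides 𝒯 := by
  obtain ⟨B, hB, -, k, s, rfl, -⟩ := h
  exact sideBox_mem_sides hB _ _

lemma lifts_mem {𝒯 : Finset (Box (d+1))} {j : Fin (d+1)} {y : ℝ} {C : Box d}
    {L : Box (d+1)} (h : Lifts 𝒯 j y C L) {v : Fin d → ℝ} (hv : C.mem v) :
    L.mem (j.insertNth y v) := by
  refine mem_insertNth_iff.2 ⟨⟨(lifts_crossing h).1.le, (lifts_crossing h).2.le⟩, ?_⟩
  rw [lifts_slice h]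
  exact hv

lemma lifts_exists {𝒯 : Finset (Box (d+1))} {j : Fin (d+1)} {y : ℝ}
    (hy1 : -1 < y) (hy2 : y < 1)
    (hgen : ∀ B ∈ 𝒯, (y : EReal) ≠ B.lo j ∧ (y : EReal) ≠ B.hi j)
    {C : Box d} (hC : C ∈ sides (sliceT 𝒯 j y)) : ∃ L, Lifts 𝒯 j y C L := by
  simp only [sides, Finset.mem_image] at hC
  obtain ⟨⟨Q, k, s⟩, hq, rfl⟩ := hC
  have hQwe : Q ∈ withExt (sliceT 𝒯 j y) := (Finset.mem_product.1 hq).1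
  obtain ⟨B, hBwe, hcr, hsl⟩ := slice_rep hy1 hy2 hgen hQwe
  exact ⟨sideBox B (j.succAbove k) s, B, hBwe, hcr, k, s, rfl, by rw [hsl]⟩

lemma lifts_linked {𝒯 : Finset (Box (d+1))} (hd : 1 ≤ d) {j : Fin (d+1)} {y : ℝ}
    {C C' : Box d} {L L' : Box (d+1)} (hCC' : Linked C C')
    (hL : Lifts 𝒯 j y C L) (hL' : Lifts 𝒯 j y C' L') : Linked L L' := by
  constructor
  · obtain ⟨v, hv, hv'⟩ := hCC'.1
    exact ⟨j.insertNth y v, lifts_mem hL hv, lifts_mem hL' hv'⟩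
  · rw [interDim_succAbove L L' j, lifts_slice hL, lifts_slice hL', hCC'.2,
      if_pos (lt_of_lt_of_le (max_lt (lifts_crossing hL).1 (lifts_crossing hL').1)
        (le_min (lifts_crossing hL).2.le (lifts_crossing hL').2.le))]
    omega

lemma lifts_same {𝒯 : Finset (Box (d+1))} (hT : IsTiling 𝒯) (hd : 1 ≤ d) {j : Fin (d+1)}
    {y : ℝ} {C : Box d} {L₁ L₂ : Box (d+1)} (hne : ∃ v, C.mem v)
    (h₁ : Lifts 𝒯 j y C L₁) (h₂ : Lifts 𝒯 j y C L₂) : Linked L₁ L₂ := by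
  obtain ⟨v, hv⟩ := hne
  constructor
  · exact ⟨j.insertNth y v, lifts_mem h₁ hv, lifts_mem h₂ hv⟩
  · rw [interDim_succAbove L₁ L₂ j, lifts_slice h₁, lifts_slice h₂,
      if_pos (lt_of_lt_of_le (max_lt (lifts_crossing h₁).1 (lifts_crossing h₂).1)
        (le_min (lifts_crossing h₁).2.le (lifts_crossing h₂).2.le))]
    have hCC : interDim C C = d - 1 := by
      obtain ⟨B, hBwe, -, k, s, -, rfl⟩ := h₁
      have hfd : (sliceBox B j).FullDim := slice_fullDim (withExt_fullDim hT hBwe)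
      apply interDim_eq_of k
      · rw [sideBox_lo_self, sideBox_hi_self]
        simp
      · intro l hl
        rw [sideBox_lo_ne _ hl, sideBox_hi_ne _ hl]
        simp only [max_self, min_self]
        exact hfd l
    rw [hCC]
    omega

lemma lift_chain {𝒯 : Finset (Box (d+1))} (hT : IsTiling 𝒯) {j : Fin (d+1)} {y : ℝ}
    (hy1 : -1 < y) (hy2 : y < 1)
    (hgen : ∀ B ∈ 𝒯, (y : EReal) ≠ B.lo j ∧ (y : EReal) ≠ B.hi j) (hd : 1 ≤ d)
    {C C' : Box d} (hch : Relation.ReflTransGen (linkRel (sliceT 𝒯 j y)) C C')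
    (hne : ∃ v, C.mem v) :
    ∀ L L', Lifts 𝒯 j y C L → Lifts 𝒯 j y C' L' →
      Relation.ReflTransGen (linkRel 𝒯) L L' := by
  induction hch with
  | refl =>
    intro L L' h1 h2
    exact Relation.ReflTransGen.single
      ⟨lifts_sides h1, lifts_sides h2, lifts_same hT hd hne h1 h2⟩
  | @tail b c hcb hedge ih =>
    intro L L' h1 h2
    obtain ⟨Lb, hLb⟩ := lifts_exists hy1 hy2 hgen hedge.1
    exact Relation.ReflTransGen.tail (ih L Lb h1 hLb)
      ⟨lifts_sides hLb, lifts_sides h2, lifts_linked hd hedge.2.2 hLb h2⟩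

/-- Choice of a generic hyperplane level in any nonempty interval. -/
lemma exists_generic {dd : ℕ} (𝒮 : Finset (Box dd)) (j : Fin dd) {a b : EReal}
    (hab : a < b) :
    ∃ y : ℝ, a < (y : EReal) ∧ (y : EReal) < b ∧
      ∀ B ∈ 𝒮, (y : EReal) ≠ B.lo j ∧ (y : EReal) ≠ B.hi j := by
  obtain ⟨a', ha1, ha2⟩ := exists_real_btwn hab
  obtain ⟨b', hb1, hb2⟩ := exists_real_btwn ha2
  have ha'b' : a' < b' := by exact_mod_cast hb1
  set bad : Set ℝ := {r : ℝ | ∃ B ∈ 𝒮, (r : EReal) = B.lo j ∨ (r : EReal) = B.hi j} with hbad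
  have hbadfin : bad.Finite := by
    have hsub : bad ⊆ ⋃ B ∈ (𝒮 : Finset (Box dd)),
        ({r : ℝ | (r : EReal) = B.lo j} ∪ {r : ℝ | (r : EReal) = B.hi j}) := by
      intro r hr
      obtain ⟨B, hB, h⟩ := hr
      exact Set.mem_biUnion hB (by
        rcases h with h | h
        · exact Or.inl h
        · exact Or.inr h)
    refine Set.Finite.subset (Set.Finite.biUnion 𝒮.finite_toSet (fun B _ => ?_)) hsub
    refine Set.Finite.union ?_ ?_ <;>
    · apply Set.Subsingleton.finite
      intro r hr r' hr'
      simp only [Set.mem_setOf_eq] at hr hr'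
      have : (r : EReal) = (r' : EReal) := by rw [hr, hr']
      exact_mod_cast this
  obtain ⟨y, hy⟩ := ((Set.Ioo_infinite ha'b').diff hbadfin).nonempty
  obtain ⟨⟨hy1, hy2⟩, hy3⟩ := hy
  refine ⟨y, ?_, ?_, ?_⟩
  · calc a < (a' : EReal) := ha1
    _ < (y : EReal) := by exact_mod_cast hy1
  · calc ((y : ℝ) : EReal) < (b' : EReal) := by exact_mod_cast hy2
    _ < b := hb2
  · intro B hB
    constructor <;> intro hc <;> exact hy3 ⟨B, hB, by rw [hc]; simp⟩

lemma side_subset_box {B : Box d} (hfd : B.FullDim) {i : Fin d} {s : Bool}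
    {p : Fin d → ℝ} (h : (sideBox B i s).mem p) : B.mem p := by
  rw [mem_sideBox_iff] at h
  intro m
  by_cases hm : m = i
  · subst hm
    cases s
    · simp only [Bool.false_eq_true, if_false] at h
      exact ⟨le_of_eq h.1.symm, h.1 ▸ (hfd m).le⟩
    · simp only [if_true] at h
      exact ⟨h.1 ▸ (hfd m).le, le_of_eq h.1⟩
  · exact h.2 m hm

lemma slice_withExt {𝒯 : Finset (Box (d+1))} {j : Fin (d+1)} {y : ℝ}
    (hy1 : -1 < y) (hy2 : y < 1) {B : Box (d+1)} (hB : B ∈ withExt 𝒯)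
    (hc : B.lo j < (y : EReal) ∧ (y : EReal) < B.hi j) :
    sliceBox B j ∈ withExt (sliceT 𝒯 j y) := by
  rcases Finset.mem_union.1 hB with h | h
  · exact Finset.mem_union_left _ (slice_mem_sliceT h hc.1.le hc.2.le)
  · simp only [extBoxes, Finset.mem_image] at h
    obtain ⟨⟨κ, sκ⟩, -, rfl⟩ := h
    have hκj : κ ≠ j := by
      rintro rfl
      rw [extBox_lo_self, extBox_hi_self] at hc
      cases sκ
      · simp only [Bool.false_eq_true, if_false] at hc
        have : y < -1 := by exact_mod_cast hc.2
        linarith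
      · simp only [if_true] at hc
        have : (1:ℝ) < y := by exact_mod_cast hc.1
        linarith
    obtain ⟨k, hk⟩ := Fin.exists_succAbove_eq hκj
    rw [← hk, slice_ext_eq]
    exact Finset.mem_union_right _ (extBox_mem_extBoxes k sκ)

/-! ### The main connectivity theorem -/

theorem main_connect : ∀ (d : ℕ) (𝒯 : Finset (Box d)), IsTiling 𝒯 → Proper 𝒯 →
    ∀ S S' : Box d, S ∈ sides 𝒯 → S' ∈ sides 𝒯 → ∀ (i : Fin d) (x : ℝ),
    DegenAt S i x → DegenAt S' i x → Intersects S S' →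
    Relation.ReflTransGen (linkRel 𝒯) S S' := by
  intro d
  induction d with
  | zero =>
    intro _ _ _ _ _ _ _ i
    exact i.elim0
  | succ d IH =>
    intro 𝒯 hT hP S S' hS hS' i x hdS hdS' hint
    by_cases hSS' : S = S'
    · rw [hSS']
    obtain ⟨B, hBwe, s, rfl, hvB⟩ := side_rep hT hS hdS
    obtain ⟨B', hB'we, s', rfl, hvB'⟩ := side_rep hT hS' hdS'
    have hfdB := withExt_fullDim hT hBwe
    have hfdB' := withExt_fullDim hT hB'we
    obtain ⟨p, hp, hp'⟩ := hint
    have hpS : (sideBox B i s).mem p := hp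
    have hpS' : (sideBox B' i s').mem p := hp'
    have hpB : B.mem p := side_subset_box hfdB hpS
    have hpB' : B'.mem p := side_subset_box hfdB' hpS'
    have hpi : (p i : EReal) = (x : EReal) := by
      rw [(mem_sideBox_iff.1 hpS).1, hvB]
    -- Case: both boxes exterior
    by_cases hexts : (B ∈ extBoxes (d+1)) ∧ (B' ∈ extBoxes (d+1))
    · obtain ⟨h1, h2⟩ := hexts
      simp only [extBoxes, Finset.mem_image] at h1 h2
      obtain ⟨⟨κ, sκ⟩, -, rfl⟩ := h1
      obtain ⟨⟨κ', sκ'⟩, -, rfl⟩ := h2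
      exact ext_ext_connect 𝒯 hvB hvB'
    -- at least one tile
    have htile : B ∈ 𝒯 ∨ B' ∈ 𝒯 := by
      rcases not_and_or.1 hexts with h | h
      · left
        rcases Finset.mem_union.1 hBwe with h' | h'
        · exact h'
        · exact absurd h' h
      · right
        rcases Finset.mem_union.1 hB'we with h' | h'
        · exact h'
        · exact absurd h' h
    -- Case: directly linked
    by_cases hall : ∀ l, l ≠ i → max (B.lo l) (B'.lo l) < min (B.hi l) (B'.hi l)
    · refine Relation.ReflTransGen.single ⟨hS, hS', ⟨p, hp, hp'⟩, ?_⟩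
      apply interDim_eq_of i
      · rw [sideBox_lo_self, sideBox_hi_self, sideBox_lo_self, sideBox_hi_self, hvB, hvB']
        simp
      · intro l hl
        rw [sideBox_lo_ne _ hl, sideBox_hi_ne _ hl, sideBox_lo_ne _ hl, sideBox_hi_ne _ hl]
        exact hall l hl
    -- Case A: a nondegenerate touching coordinate exists: slice
    by_cases hcaseA : ∃ l, l ≠ i ∧ max (B.lo l) (B'.lo l) < min (B.hi l) (B'.hi l)
    · obtain ⟨j, hji, hnd⟩ := hcaseA
      -- bounds for the slicing level
      have hbounds : max (B.lo j) (B'.lo j) < ((1:ℝ) : EReal) ∧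
          ((-1:ℝ) : EReal) < min (B.hi j) (B'.hi j) := by
        rcases htile with hD | hD
        · exact ⟨lt_of_lt_of_le hnd (le_trans (min_le_left _ _) (tile_bounds hT hD j).2),
            lt_of_le_of_lt (le_trans (tile_bounds hT hD j).1 (le_max_left _ _)) hnd⟩
        · exact ⟨lt_of_lt_of_le hnd (le_trans (min_le_right _ _) (tile_bounds hT hD j).2),
            lt_of_le_of_lt (le_trans (tile_bounds hT hD j).1 (le_max_right _ _)) hnd⟩
      have hab : max (max (B.lo j) (B'.lo j)) ((-1:ℝ) : EReal) <
          min (min (B.hi j) (B'.hi j)) ((1:ℝ) : EReal) := by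
        apply max_lt
        · exact lt_min hnd hbounds.1
        · apply lt_min hbounds.2
          exact_mod_cast (by norm_num : (-1:ℝ) < 1)
      obtain ⟨y, hya, hyb, hgen⟩ := exists_generic 𝒯 j hab
      have hy1 : -1 < y := by
        have : ((-1:ℝ) : EReal) < (y : EReal) :=
          lt_of_le_of_lt (le_max_right _ _) hya
        exact_mod_cast this
      have hy2 : y < 1 := by
        have : (y : EReal) < ((1:ℝ) : EReal) :=
          lt_of_lt_of_le hyb (min_le_right _ _)
        exact_mod_cast this
      have hcB : B.lo j < (y : EReal) ∧ (y : EReal) < B.hi j :=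
        ⟨lt_of_le_of_lt (le_trans (le_max_left _ _) (le_max_left _ _)) hya,
         lt_of_lt_of_le hyb (le_trans (min_le_left _ _) (min_le_left _ _))⟩
      have hcB' : B'.lo j < (y : EReal) ∧ (y : EReal) < B'.hi j :=
        ⟨lt_of_le_of_lt (le_trans (le_max_right _ _) (le_max_left _ _)) hya,
         lt_of_lt_of_le hyb (le_trans (min_le_left _ _) (min_le_right _ _))⟩
      obtain ⟨i', hk⟩ := Fin.exists_succAbove_eq (Ne.symm hji)
      set q : Fin (d+1) → ℝ := Function.update p j y with hqdef
      have hqS : (sideBox B i s).mem q := by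
        intro m
        by_cases hm : m = j
        · subst hm
          rw [hqdef, Function.update_self, sideBox_lo_ne B hji s, sideBox_hi_ne B hji s]
          exact ⟨hcB.1.le, hcB.2.le⟩
        · rw [hqdef, Function.update_of_ne hm]
          exact hpS m
      have hqS' : (sideBox B' i s').mem q := by
        intro m
        by_cases hm : m = j
        · subst hm
          rw [hqdef, Function.update_self, sideBox_lo_ne B' hji s', sideBox_hi_ne B' hji s']
          exact ⟨hcB'.1.le, hcB'.2.le⟩
        · rw [hqdef, Function.update_of_ne hm]
          exact hpS' m
      set v : Fin d → ℝ := j.removeNth q with hvdef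
      have huq : j.insertNth y v = q := by
        rw [hvdef]
        have : y = q j := by rw [hqdef, Function.update_self]
        rw [this]
        exact Fin.insertNth_self_removeNth j q
      have hsplit : sliceBox (sideBox B i s) j = sideBox (sliceBox B j) i' s := by
        rw [← hk]
        exact slice_side_comm i' s
      have hsplit' : sliceBox (sideBox B' i s') j = sideBox (sliceBox B' j) i' s' := by
        rw [← hk]
        exact slice_side_comm i' s'
      have hSdmem : (sideBox (sliceBox B j) i' s).mem v := by
        rw [← hsplit]
        exact (mem_insertNth_iff.1 (huq ▸ hqS)).2
      have hS'dmem : (sideBox (sliceBox B' j) i' s').mem v := by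
        rw [← hsplit']
        exact (mem_insertNth_iff.1 (huq ▸ hqS')).2
      have hT' := sliceT_isTiling hT hy1 hy2 hgen
      have hP' := sliceT_proper hT hP hy1 hy2 hgen
      have hQwe : sliceBox B j ∈ withExt (sliceT 𝒯 j y) := slice_withExt hy1 hy2 hBwe hcB
      have hQ'we : sliceBox B' j ∈ withExt (sliceT 𝒯 j y) := slice_withExt hy1 hy2 hB'we hcB'
      have hval' : (if s then (sliceBox B j).hi i' else (sliceBox B j).lo i') = (x : EReal) := by
        cases s
        · simp only [Bool.false_eq_true, if_false]
          show B.lo (j.succAbove i') = _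
          rw [hk]
          simpa using hvB
        · simp only [if_true]
          show B.hi (j.succAbove i') = _
          rw [hk]
          simpa using hvB
      have hval'' : (if s' then (sliceBox B' j).hi i' else (sliceBox B' j).lo i') = (x : EReal) := by
        cases s'
        · simp only [Bool.false_eq_true, if_false]
          show B'.lo (j.succAbove i') = _
          rw [hk]
          simpa using hvB'
        · simp only [if_true]
          show B'.hi (j.succAbove i') = _
          rw [hk]
          simpa using hvB'
      have hchain := IH (sliceT 𝒯 j y) hT' hP'
        (sideBox (sliceBox B j) i' s) (sideBox (sliceBox B' j) i' s')
        (sideBox_mem_sides hQwe i' s) (sideBox_mem_sides hQ'we i' s') i' x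
        ⟨by rw [sideBox_lo_self, hval'], by rw [sideBox_hi_self, hval']⟩
        ⟨by rw [sideBox_lo_self, hval''], by rw [sideBox_hi_self, hval'']⟩
        ⟨v, hSdmem, hS'dmem⟩
      have hLift : Lifts 𝒯 j y (sideBox (sliceBox B j) i' s) (sideBox B i s) :=
        ⟨B, hBwe, hcB, i', s, by rw [hk], rfl⟩
      have hLift' : Lifts 𝒯 j y (sideBox (sliceBox B' j) i' s') (sideBox B' i s') :=
        ⟨B', hB'we, hcB', i', s', by rw [hk], rfl⟩
      exact lift_chain hT hy1 hy2 hgen i'.pos hchain ⟨v, hSdmem⟩ _ _ hLift hLift'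
    -- Case B: all coordinates other than `i` touch degenerately: bridge box
    · push_neg at hall hcaseA
      obtain ⟨l₀, hl₀i, -⟩ := hall
      have hd1 : 1 ≤ d := by
        rcases Nat.eq_zero_or_pos d with rfl | h
        · exfalso
          have h1 := l₀.isLt
          have h2 := i.isLt
          exact hl₀i (Fin.ext (by omega))
        · exact h
      have hd2 : 2 ≤ d + 1 := by omega
      have hstruct : ∀ l, l ≠ i →
          ((p l : EReal) = B.lo l ∧ (p l : EReal) = B'.hi l) ∨
          ((p l : EReal) = B.hi l ∧ (p l : EReal) = B'.lo l) := by
        intro l hl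
        have hBl := hpB l
        have hB'l := hpB' l
        have hnd := hcaseA l hl
        have h1 : max (B.lo l) (B'.lo l) ≤ (p l : EReal) := max_le hBl.1 hB'l.1
        have h2 : (p l : EReal) ≤ min (B.hi l) (B'.hi l) := le_min hBl.2 hB'l.2
        have heq1 : max (B.lo l) (B'.lo l) = (p l : EReal) :=
          le_antisymm h1 (le_trans h2 hnd)
        have heq2 : (p l : EReal) = min (B.hi l) (B'.hi l) :=
          le_antisymm h2 (le_trans hnd heq1.le)
        have hlo : (p l : EReal) = B.lo l ∨ (p l : EReal) = B'.lo l := by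
          rcases max_choice (B.lo l) (B'.lo l) with hm | hm <;> rw [hm] at heq1
          · exact Or.inl heq1.symm
          · exact Or.inr heq1.symm
        have hhi : (p l : EReal) = B.hi l ∨ (p l : EReal) = B'.hi l := by
          rcases min_choice (B.hi l) (B'.hi l) with hm | hm <;> rw [hm] at heq2
          · exact Or.inl heq2
          · exact Or.inr heq2
        rcases hlo with h3 | h3 <;> rcases hhi with h4 | h4
        · exfalso
          have := hfdB l
          rw [← h3, ← h4] at this
          exact lt_irrefl _ this
        · exact Or.inl ⟨h3, h4⟩
        · exact Or.inr ⟨h4, h3⟩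
        · exfalso
          have := hfdB' l
          rw [← h3, ← h4] at this
          exact lt_irrefl _ this
      have hBB' : B ≠ B' := by
        rintro rfl
        by_cases hss : s = s'
        · exact hSS' (by rw [hss])
        · cases s <;> cases s'
          · exact hss rfl
          · simp only [Bool.false_eq_true, if_false] at hvB
            simp only [if_true] at hvB'
            have := hfdB i
            rw [hvB, hvB'] at this
            exact lt_irrefl _ this
          · simp only [if_true] at hvB
            simp only [Bool.false_eq_true, if_false] at hvB'
            have := hfdB i
            rw [hvB', hvB] at this
            exact lt_irrefl _ this
          · exact hss rfl
      have hiB : (p i : EReal) = B.lo i ∨ (p i : EReal) = B.hi i := by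
        cases s
        · left
          simp only [Bool.false_eq_true, if_false] at hvB
          rw [hpi, ← hvB]
        · right
          simp only [if_true] at hvB
          rw [hpi, ← hvB]
      have hiB' : (p i : EReal) = B'.lo i ∨ (p i : EReal) = B'.hi i := by
        cases s'
        · left
          simp only [Bool.false_eq_true, if_false] at hvB'
          rw [hpi, ← hvB']
        · right
          simp only [if_true] at hvB'
          rw [hpi, ← hvB']
      obtain ⟨N, hNwe, hNp, hNint, hNi, hNB, hNB'⟩ :=
        exists_bridge hT hP hd2 p i hBwe hB'we hBB' hpB hpB' hiB hiB' hstruct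
      have hTside : ∃ sN : Bool, (if sN then N.hi i else N.lo i) = (x : EReal) := by
        rcases hNi with h | h
        · refine ⟨false, ?_⟩
          simp only [Bool.false_eq_true, if_false]
          rw [← h]
          exact hpi
        · refine ⟨true, ?_⟩
          simp only [if_true]
          rw [← h]
          exact hpi
      obtain ⟨sN, hvN⟩ := hTside
      have hTmem : (sideBox N i sN).mem p := by
        rw [mem_sideBox_iff]
        refine ⟨by rw [hvN]; exact hpi, fun l hl => ?_⟩
        have hz := hNint l hl
        rw [mem_zset_iff] at hz
        exact ⟨hz.1.le, hz.2.le⟩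
      have hlink1 : Linked (sideBox B i s) (sideBox N i sN) := by
        constructor
        · exact ⟨p, hp, hTmem⟩
        · apply interDim_eq_of i
          · rw [sideBox_lo_self B i s, sideBox_hi_self B i s, sideBox_lo_self N i sN,
              sideBox_hi_self N i sN, hvB, hvN]
            simp
          · intro l hl
            rw [sideBox_lo_ne B hl s, sideBox_hi_ne B hl s, sideBox_lo_ne N hl sN,
              sideBox_hi_ne N hl sN]
            have hz := hNint l hl
            rw [mem_zset_iff] at hz
            exact max_lt_min_of_interior hfdB (hpB l) hz
      have hlink2 : Linked (sideBox B' i s') (sideBox N i sN) := by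
        constructor
        · exact ⟨p, hp', hTmem⟩
        · apply interDim_eq_of i
          · rw [sideBox_lo_self B' i s', sideBox_hi_self B' i s', sideBox_lo_self N i sN,
              sideBox_hi_self N i sN, hvB', hvN]
            simp
          · intro l hl
            rw [sideBox_lo_ne B' hl s', sideBox_hi_ne B' hl s', sideBox_lo_ne N hl sN,
              sideBox_hi_ne N hl sN]
            have hz := hNint l hl
            rw [mem_zset_iff] at hz
            exact max_lt_min_of_interior hfdB' (hpB' l) hz
      exact Relation.ReflTransGen.tail
        (Relation.ReflTransGen.single ⟨hS, sideBox_mem_sides hNwe i sN, hlink1⟩)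
        ⟨sideBox_mem_sides hNwe i sN, hS', linked_symm hlink2⟩

/-! ### Glue: separations are unions of coplanar sides -/

lemma chain_mem {𝒯 : Finset (Box d)} {S₀ S : Box d}
    (h : Relation.ReflTransGen (linkRel 𝒯) S₀ S) : S = S₀ ∨ S ∈ sides 𝒯 := by
  induction h with
  | refl => exact Or.inl rfl
  | tail hcb hedge ih => exact Or.inr hedge.2.1

/-- A link preserves the degeneracy data `(i, x)`. -/
lemma edge_degen {𝒯 : Finset (Box d)} (hT : IsTiling 𝒯) {S T : Box d}
    (hedge : linkRel 𝒯 S T) {i : Fin d} {x : ℝ} (hdeg : DegenAt S i x) :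
    DegenAt T i x := by
  obtain ⟨hSs, hTs, hint, hdim⟩ := hedge
  obtain ⟨q, hqS, hqT⟩ := hint
  have hqS' : S.mem q := hqS
  have hqi : (q i : EReal) = (x : EReal) := by
    have h1 := hqS' i
    rw [hdeg.1] at h1
    rw [hdeg.2] at h1
    exact le_antisymm h1.2 h1.1
  simp only [sides, Finset.mem_image] at hTs
  obtain ⟨⟨C, m, t⟩, hqprod, rfl⟩ := hTs
  have hCwe : C ∈ withExt 𝒯 := (Finset.mem_product.1 hqprod).1
  have hqT' : (sideBox C m t).mem q := hqT
  have hPi : ¬ (max (S.lo i) ((sideBox C m t).lo i) <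
      min (S.hi i) ((sideBox C m t).hi i)) := by
    intro hlt
    have h1 : min (S.hi i) ((sideBox C m t).hi i) ≤ (x : EReal) :=
      le_trans (min_le_left _ _) (le_of_eq hdeg.2)
    have h2 : (x : EReal) ≤ max (S.lo i) ((sideBox C m t).lo i) :=
      le_trans (le_of_eq hdeg.1.symm) (le_max_left _ _)
    exact absurd (lt_of_le_of_lt h2 (lt_of_lt_of_le hlt h1)) (lt_irrefl _)
  have hPm : ¬ (max (S.lo m) ((sideBox C m t).lo m) <
      min (S.hi m) ((sideBox C m t).hi m)) := by
    intro hlt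
    have h1 : min (S.hi m) ((sideBox C m t).hi m) ≤ (if t then C.hi m else C.lo m) := by
      rw [← sideBox_hi_self C m t]
      exact min_le_right _ _
    have h2 : (if t then C.hi m else C.lo m) ≤ max (S.lo m) ((sideBox C m t).lo m) := by
      rw [← sideBox_lo_self C m t]
      exact le_max_right _ _
    exact absurd (lt_of_le_of_lt h2 (lt_of_lt_of_le hlt h1)) (lt_irrefl _)
  rw [interDim] at hdim
  have hsub : (Finset.univ.filter fun l => max (S.lo l) ((sideBox C m t).lo l) <
      min (S.hi l) ((sideBox C m t).hi l)) ⊆ Finset.univ.erase i := by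
    intro l hl
    rw [Finset.mem_filter] at hl
    refine Finset.mem_erase.2 ⟨fun hc => hPi (hc ▸ hl.2), Finset.mem_univ _⟩
  have hcard : (Finset.univ.erase i).card ≤ (Finset.univ.filter fun l =>
      max (S.lo l) ((sideBox C m t).lo l) < min (S.hi l) ((sideBox C m t).hi l)).card := by
    rw [hdim, Finset.card_erase_of_mem (Finset.mem_univ _), Finset.card_univ,
      Fintype.card_fin]
  have hfe := Finset.eq_of_subset_of_card_le hsub hcard
  have hmi : m = i := by
    by_contra hc
    have hmem : m ∈ Finset.univ.erase i := Finset.mem_erase.2 ⟨hc, Finset.mem_univ _⟩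
    rw [← hfe, Finset.mem_filter] at hmem
    exact hPm hmem.2
  subst hmi
  have hqm := hqT' m
  rw [sideBox_lo_self, sideBox_hi_self] at hqm
  have hval : (if t then C.hi m else C.lo m) = (x : EReal) := by
    rw [← le_antisymm hqm.2 hqm.1]
    exact hqi
  exact ⟨by rw [sideBox_lo_self, hval], by rw [sideBox_hi_self, hval]⟩

lemma chain_degen {𝒯 : Finset (Box d)} (hT : IsTiling 𝒯) {S₀ S : Box d}
    (hch : Relation.ReflTransGen (linkRel 𝒯) S₀ S) {i : Fin d} {x : ℝ}
    (h0 : DegenAt S₀ i x) : DegenAt S i x := by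
  induction hch with
  | refl => exact h0
  | tail hcb hedge ih => exact edge_degen hT hedge ih

end Stmt12

/-- In a proper `d`-tiling `T`, two distinct separations that
are coplanar (degenerate in the same dimension `i`, contained in the same
hyperplane `H^(i)_x`) do not intersect. -/
theorem stmt12 (d : ℕ) (𝒯 : Finset (Box d)) (hT : IsTiling 𝒯) (hP : Proper 𝒯)
    (S₀ S₁ : Box d) (hS₀ : S₀ ∈ sides 𝒯) (hS₁ : S₁ ∈ sides 𝒯)
    (hdistinct : ¬ Relation.ReflTransGen (linkRel 𝒯) S₀ S₁)
    (i : Fin d) (x : ℝ) (h₀ : DegenAt S₀ i x) (h₁ : DegenAt S₁ i x) :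
    sepSet 𝒯 S₀ ∩ sepSet 𝒯 S₁ = ∅ := by
  classical
  rw [Set.eq_empty_iff_forall_notMem]
  intro p hp
  obtain ⟨hp0, hp1⟩ := hp
  simp only [sepSet, Set.mem_iUnion] at hp0 hp1
  obtain ⟨S, hSc, hpS⟩ := hp0
  obtain ⟨S', hS'c, hpS'⟩ := hp1
  have hSc' : Relation.ReflTransGen (linkRel 𝒯) S₀ S := hSc
  have hS'c' : Relation.ReflTransGen (linkRel 𝒯) S₁ S' := hS'c
  have hSsides : S ∈ sides 𝒯 := by
    rcases Stmt12.chain_mem hSc' with h | h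
    · rw [h]; exact hS₀
    · exact h
  have hS'sides : S' ∈ sides 𝒯 := by
    rcases Stmt12.chain_mem hS'c' with h | h
    · rw [h]; exact hS₁
    · exact h
  have hdegS : DegenAt S i x := Stmt12.chain_degen hT hSc' h₀
  have hdegS' : DegenAt S' i x := Stmt12.chain_degen hT hS'c' h₁
  have hmain := Stmt12.main_connect d 𝒯 hT hP S S' hSsides hS'sides i x hdegS hdegS'
    ⟨p, hpS, hpS'⟩
  have hsym : Symmetric (Relation.ReflTransGen (linkRel 𝒯)) :=
    fun a b h => (@Relation.ReflTransGen.stdSymm _ _ ⟨fun a b h => Stmt12.linkRel_symm h⟩).symm a b h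
  exact hdistinct ((hSc'.trans hmain).trans (hsym hS'c'))


end
end

section
/- Let T be a proper d-tiling in general position with d > 1 and |T| > 1, and let X be the (unique) box of T containing the point (−1,…,−1). Then there exist i ∈ {1,…,d} and a box Y ∈ T such that X_i^+ = Y_i^- and X_j^+ = Y_j^+ for all j ≠ i. -/
/- Common framework: axis-parallel boxes (with extended-real endpoints, to
accommodate the unbounded exterior boxes of `T_ext`), `d`-tilings of the cube
`[-1,1]^d`, the exterior boxes, proper tilings, slices, cuts, sides and
separations. -/

noncomputable section

open Classical

attribute [local instance] Classical.propDecidable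

namespace Stmt15Aux

variable {d : ℕ}

/-- Real lower endpoint. -/
def rlo (B : Box d) (j : Fin d) : ℝ := (B.lo j).toReal

/-- Real upper endpoint. -/
def rhi (B : Box d) (j : Fin d) : ℝ := (B.hi j).toReal

lemma exists_strict_point (B : Box d) (hB : B.FullDim) :
    ∃ q : Fin d → ℝ, ∀ j, B.lo j < (q j : EReal) ∧ (q j : EReal) < B.hi j := by
  have h : ∀ j, ∃ x : ℝ, B.lo j < (x : EReal) ∧ (x : EReal) < B.hi j :=
    fun j => EReal.exists_between_coe_real (hB j)
  choose q hq using h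
  exact ⟨q, hq⟩

lemma tile_bounds {𝒯 : Finset (Box d)} (hT : IsTiling 𝒯) {B : Box d} (hB : B ∈ 𝒯) (j : Fin d) :
    ((-1 : ℝ) : EReal) ≤ B.lo j ∧ B.hi j ≤ ((1 : ℝ) : EReal) := by
  obtain ⟨q, hq⟩ := exists_strict_point B (hT.1 B hB)
  constructor
  · by_contra h
    push_neg at h
    have h2 : B.lo j < min ((-1 : ℝ) : EReal) (B.hi j) := lt_min h (hT.1 B hB j)
    obtain ⟨x, hx1, hx2⟩ := EReal.exists_between_coe_real h2
    have hmem : B.mem (Function.update q j x) := by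
      intro k
      by_cases hk : k = j
      · subst hk
        simp only [Function.update_self]
        exact ⟨hx1.le, ((lt_min_iff.mp hx2).2).le⟩
      · simp only [Function.update_of_ne hk]
        exact ⟨(hq k).1.le, (hq k).2.le⟩
    have hcube := hT.2.1 B hB hmem j
    have hx : x < -1 := EReal.coe_lt_coe_iff.mp (lt_min_iff.mp hx2).1
    rw [Function.update_self] at hcube
    linarith [hcube.1]
  · by_contra h
    push_neg at h
    have h2 : max ((1 : ℝ) : EReal) (B.lo j) < B.hi j := max_lt h (hT.1 B hB j)
    obtain ⟨x, hx1, hx2⟩ := EReal.exists_between_coe_real h2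
    have hmem : B.mem (Function.update q j x) := by
      intro k
      by_cases hk : k = j
      · subst hk
        simp only [Function.update_self]
        exact ⟨((max_lt_iff.mp hx1).2).le, hx2.le⟩
      · simp only [Function.update_of_ne hk]
        exact ⟨(hq k).1.le, (hq k).2.le⟩
    have hcube := hT.2.1 B hB hmem j
    have hx : (1 : ℝ) < x := EReal.coe_lt_coe_iff.mp (max_lt_iff.mp hx1).1
    rw [Function.update_self] at hcube
    linarith [hcube.2]

lemma real_endpoints {𝒯 : Finset (Box d)} (hT : IsTiling 𝒯) {B : Box d} (hB : B ∈ 𝒯)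
    (j : Fin d) :
    B.lo j = ((rlo B j : ℝ) : EReal) ∧ B.hi j = ((rhi B j : ℝ) : EReal) ∧
      -1 ≤ rlo B j ∧ rlo B j < rhi B j ∧ rhi B j ≤ 1 := by
  obtain ⟨h1, h2⟩ := tile_bounds hT hB j
  have hfd := hT.1 B hB j
  have hlo_ne_bot : B.lo j ≠ ⊥ := by
    intro h
    rw [h] at h1
    exact EReal.coe_ne_bot _ (le_bot_iff.mp h1)
  have hlo_ne_top : B.lo j ≠ ⊤ := ((hfd.trans_le h2).trans (EReal.coe_lt_top 1)).ne
  have hhi_ne_top : B.hi j ≠ ⊤ := (h2.trans_lt (EReal.coe_lt_top 1)).ne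
  have hhi_ne_bot : B.hi j ≠ ⊥ := by
    intro h
    rw [h] at hfd
    exact (not_lt_bot hfd)
  have e1 : B.lo j = ((rlo B j : ℝ) : EReal) := (EReal.coe_toReal hlo_ne_top hlo_ne_bot).symm
  have e2 : B.hi j = ((rhi B j : ℝ) : EReal) := (EReal.coe_toReal hhi_ne_top hhi_ne_bot).symm
  refine ⟨e1, e2, ?_, ?_, ?_⟩
  · rw [e1] at h1; exact EReal.coe_le_coe_iff.mp h1
  · rw [e1, e2] at hfd; exact EReal.coe_lt_coe_iff.mp hfd
  · rw [e2] at h2; exact EReal.coe_le_coe_iff.mp h2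

lemma mem_iff {𝒯 : Finset (Box d)} (hT : IsTiling 𝒯) {B : Box d} (hB : B ∈ 𝒯)
    (p : Fin d → ℝ) : B.mem p ↔ ∀ j, rlo B j ≤ p j ∧ p j ≤ rhi B j := by
  constructor
  · intro h j
    have := h j
    rw [(real_endpoints hT hB j).1, (real_endpoints hT hB j).2.1] at this
    exact ⟨EReal.coe_le_coe_iff.mp this.1, EReal.coe_le_coe_iff.mp this.2⟩
  · intro h j
    rw [(real_endpoints hT hB j).1, (real_endpoints hT hB j).2.1]
    exact ⟨EReal.coe_le_coe_iff.mpr (h j).1, EReal.coe_le_coe_iff.mpr (h j).2⟩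

lemma interior_iff {𝒯 : Finset (Box d)} (hT : IsTiling 𝒯) {B : Box d} (hB : B ∈ 𝒯)
    (p : Fin d → ℝ) : p ∈ B.interior ↔ ∀ j, rlo B j < p j ∧ p j < rhi B j := by
  show (∀ j, B.lo j < (p j : EReal) ∧ (p j : EReal) < B.hi j) ↔ _
  constructor
  · intro h j
    have := h j
    rw [(real_endpoints hT hB j).1, (real_endpoints hT hB j).2.1] at this
    exact ⟨EReal.coe_lt_coe_iff.mp this.1, EReal.coe_lt_coe_iff.mp this.2⟩
  · intro h j
    rw [(real_endpoints hT hB j).1, (real_endpoints hT hB j).2.1]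
    exact ⟨EReal.coe_lt_coe_iff.mpr (h j).1, EReal.coe_lt_coe_iff.mpr (h j).2⟩

lemma overlap_eq {𝒯 : Finset (Box d)} (hT : IsTiling 𝒯) {A B : Box d} (hA : A ∈ 𝒯)
    (hB : B ∈ 𝒯) (h : ∀ j, max (rlo A j) (rlo B j) < min (rhi A j) (rhi B j)) : A = B := by
  by_contra hne
  have hdisj := hT.2.2.1 A hA B hB hne
  set q : Fin d → ℝ := fun j => (max (rlo A j) (rlo B j) + min (rhi A j) (rhi B j)) / 2 with hqdef
  have hq : ∀ j, max (rlo A j) (rlo B j) < q j ∧ q j < min (rhi A j) (rhi B j) := by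
    intro j
    constructor
    · simp only [hqdef]; linarith [h j]
    · simp only [hqdef]; linarith [h j]
  have hqA : q ∈ A.interior := (interior_iff hT hA q).mpr fun j =>
    ⟨lt_of_le_of_lt (le_max_left _ _) (hq j).1, lt_of_lt_of_le (hq j).2 (min_le_left _ _)⟩
  have hqB : q ∈ B.interior := (interior_iff hT hB q).mpr fun j =>
    ⟨lt_of_le_of_lt (le_max_right _ _) (hq j).1, lt_of_lt_of_le (hq j).2 (min_le_right _ _)⟩
  exact Set.eq_empty_iff_forall_notMem.mp hdisj q ⟨hqA, hqB⟩

end Stmt15Aux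
namespace Stmt15Aux

variable {d : ℕ}

lemma dir_tile {𝒯 : Finset (Box d)} (hT : IsTiling 𝒯) (hd0 : 0 < d) (c v : Fin d → ℝ)
    (hc : ∀ j, -1 < c j ∧ c j ≤ 1) (hv : ∀ j, 0 < v j → c j < 1) :
    ∃ Y, Y ∈ 𝒯 ∧ (∀ j, rlo Y j ≤ c j ∧ c j ≤ rhi Y j) ∧
      (∀ j, v j < 0 → rlo Y j < c j) ∧ (∀ j, 0 < v j → c j < rhi Y j) := by
  have hδj : ∀ j : Fin d, ∃ δ : ℝ, 0 < δ ∧ ∀ ε : ℝ, 0 < ε → ε ≤ δ →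
      -1 ≤ c j + ε * v j ∧ c j + ε * v j ≤ 1 := by
    intro j
    rcases lt_trichotomy (v j) 0 with h | h | h
    · refine ⟨(c j + 1) / (-v j), div_pos (by linarith [(hc j).1]) (by linarith), ?_⟩
      intro ε hε1 hε2
      have h1 : ε * (-v j) ≤ ((c j + 1) / (-v j)) * (-v j) :=
        mul_le_mul_of_nonneg_right hε2 (by linarith)
      rw [div_mul_cancel₀ _ (by linarith : -v j ≠ 0)] at h1
      constructor
      · linarith
      · nlinarith [(hc j).2]
    · refine ⟨1, one_pos, fun ε hε1 hε2 => ?_⟩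
      rw [h]
      constructor <;> simp <;> linarith [(hc j).1, (hc j).2]
    · refine ⟨(1 - c j) / v j, div_pos (by linarith [hv j h]) h, ?_⟩
      intro ε hε1 hε2
      have h1 : ε * v j ≤ ((1 - c j) / v j) * v j :=
        mul_le_mul_of_nonneg_right hε2 (by linarith)
      rw [div_mul_cancel₀ _ (by linarith : v j ≠ 0)] at h1
      constructor
      · nlinarith [(hc j).1]
      · linarith
  choose δf hδf0 hδf using hδj
  have hne : (Finset.univ : Finset (Fin d)).Nonempty := ⟨⟨0, hd0⟩, Finset.mem_univ _⟩
  set δ := Finset.univ.inf' hne δf with hδdef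
  have hδpos : 0 < δ := (Finset.lt_inf'_iff hne).mpr fun j _ => hδf0 j
  have hδle : ∀ j, δ ≤ δf j := fun j => Finset.inf'_le _ (Finset.mem_univ j)
  set p : ℕ → Fin d → ℝ := fun n j => c j + (δ / (n + 1)) * v j with hp
  have hεn : ∀ n : ℕ, 0 < δ / ((n : ℝ) + 1) ∧ δ / ((n : ℝ) + 1) ≤ δ := by
    intro n
    have hn1 : (0 : ℝ) < (n : ℝ) + 1 := by positivity
    constructor
    · positivity
    · apply div_le_self hδpos.le
      have : (0 : ℝ) ≤ (n : ℝ) := Nat.cast_nonneg n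
      linarith
  have hcube : ∀ n, p n ∈ cube d := by
    intro n j
    exact hδf j _ (hεn n).1 (le_trans (hεn n).2 (hδle j))
  have hex : ∀ n : ℕ, ∃ B : {B // B ∈ 𝒯}, (B : Box d).mem (p n) := by
    intro n
    obtain ⟨B, hB, hBm⟩ := hT.2.2.2 (p n) (hcube n)
    exact ⟨⟨B, hB⟩, hBm⟩
  choose f hf using hex
  obtain ⟨Y, hYinf⟩ := Finite.exists_infinite_fiber f
  rw [Set.infinite_coe_iff] at hYinf
  have key : ∀ N : ℕ, ∃ n, N ≤ n ∧ (Y : Box d).mem (p n) := by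
    intro N
    obtain ⟨n, hn, hn2⟩ := hYinf.exists_gt N
    have hfn : f n = Y := hn
    exact ⟨n, hn2.le, hfn ▸ hf n⟩
  have hYT := Y.2
  have hmemR : ∀ N : ℕ, ∃ n, N ≤ n ∧ ∀ j,
      rlo (Y : Box d) j ≤ c j + (δ / ((n : ℝ) + 1)) * v j ∧
      c j + (δ / ((n : ℝ) + 1)) * v j ≤ rhi (Y : Box d) j := by
    intro N
    obtain ⟨n, hn, hm⟩ := key N
    exact ⟨n, hn, fun j => (mem_iff hT hYT _).mp hm j⟩
  have hYlo : ∀ j, rlo (Y : Box d) j ≤ c j := by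
    intro j
    by_contra hcon
    push_neg at hcon
    set g := rlo (Y : Box d) j - c j with hg
    have hgpos : 0 < g := by simp only [hg]; linarith
    obtain ⟨N, hN⟩ := exists_nat_gt (δ * |v j| / g)
    obtain ⟨n, hn, hm⟩ := hmemR N
    have hn1 : (0 : ℝ) < (n : ℝ) + 1 := by positivity
    have h1 : δ * |v j| / g < (n : ℝ) + 1 := by
      have : (N : ℝ) ≤ (n : ℝ) := Nat.cast_le.mpr hn
      linarith
    have h2 : δ * |v j| < ((n : ℝ) + 1) * g := by
      rw [div_lt_iff₀ hgpos] at h1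
      linarith
    have h3 : (δ / ((n : ℝ) + 1)) * v j ≤ (δ / ((n : ℝ) + 1)) * |v j| :=
      mul_le_mul_of_nonneg_left (le_abs_self _) (by positivity)
    have h4 : (δ / ((n : ℝ) + 1)) * |v j| < g := by
      rw [div_mul_eq_mul_div, div_lt_iff₀ hn1]
      linarith
    have h5 := (hm j).1
    simp only [hg] at h4
    linarith
  have hYhi : ∀ j, c j ≤ rhi (Y : Box d) j := by
    intro j
    by_contra hcon
    push_neg at hcon
    set g := c j - rhi (Y : Box d) j with hg
    have hgpos : 0 < g := by simp only [hg]; linarith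
    obtain ⟨N, hN⟩ := exists_nat_gt (δ * |v j| / g)
    obtain ⟨n, hn, hm⟩ := hmemR N
    have hn1 : (0 : ℝ) < (n : ℝ) + 1 := by positivity
    have h1 : δ * |v j| / g < (n : ℝ) + 1 := by
      have : (N : ℝ) ≤ (n : ℝ) := Nat.cast_le.mpr hn
      linarith
    have h2 : δ * |v j| < ((n : ℝ) + 1) * g := by
      rw [div_lt_iff₀ hgpos] at h1
      linarith
    have h3 : -((δ / ((n : ℝ) + 1)) * |v j|) ≤ (δ / ((n : ℝ) + 1)) * v j := by
      have := mul_le_mul_of_nonneg_left (neg_abs_le (v j)) (by positivity : (0:ℝ) ≤ δ / ((n : ℝ) + 1))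
      rw [mul_neg] at this
      linarith
    have h4 : (δ / ((n : ℝ) + 1)) * |v j| < g := by
      rw [div_mul_eq_mul_div, div_lt_iff₀ hn1]
      linarith
    have h5 := (hm j).2
    simp only [hg] at h4
    linarith
  obtain ⟨n, -, hm⟩ := hmemR 0
  have hεpos : 0 < δ / ((n : ℝ) + 1) := (hεn n).1
  refine ⟨(Y : Box d), hYT, fun j => ⟨hYlo j, hYhi j⟩, ?_, ?_⟩
  · intro j hj
    have h5 := (hm j).1
    nlinarith
  · intro j hj
    have h5 := (hm j).2
    nlinarith

end Stmt15Aux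
/-- Let `T` be a proper `d`-tiling in general position with
`d > 1` and `|T| > 1`, and let `X ∈ T` be the box containing `(-1,…,-1)`.
Then there are `i ∈ {1,…,d}` and `Y ∈ T` with `X_i^+ = Y_i^-` and
`X_j^+ = Y_j^+` for all `j ≠ i`. -/
theorem stmt15 (d : ℕ) (hd : 1 < d) (𝒯 : Finset (Box d)) (hT : IsTiling 𝒯)
    (hP : Proper 𝒯) (hgen : GeneralPosition 𝒯) (hcard : 1 < 𝒯.card)
    (X : Box d) (hX : X ∈ 𝒯) (hXmem : X.mem fun _ => (-1 : ℝ)) :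
    ∃ i : Fin d, ∃ Y ∈ 𝒯,
      X.hi i = Y.lo i ∧ ∀ j, j ≠ i → X.hi j = Y.hi j := by
  open Stmt15Aux in
  by_contra hgoal
  push_neg at hgoal
  have hd0 : 0 < d := by omega
  have hXre : ∀ j, X.lo j = ((rlo X j : ℝ) : EReal) ∧ X.hi j = ((rhi X j : ℝ) : EReal) ∧
      -1 ≤ rlo X j ∧ rlo X j < rhi X j ∧ rhi X j ≤ 1 := fun j => real_endpoints hT hX j
  have hXlo : ∀ j, rlo X j = -1 := by
    intro j
    have h2 := (hXmem j).1
    rw [(hXre j).1] at h2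
    have h3 : rlo X j ≤ -1 := by simpa using EReal.coe_le_coe_iff.mp h2
    linarith [(hXre j).2.2.1]
  have hc : ∀ j, -1 < rhi X j ∧ rhi X j ≤ 1 := by
    intro j
    refine ⟨?_, (hXre j).2.2.2.2⟩
    have h1 := (hXre j).2.2.2.1
    have h2 := hXlo j
    linarith
  -- The tile in the `i`-th positive direction
  have hYi : ∀ i : Fin d, rhi X i < 1 → ∃ Y, Y ∈ 𝒯 ∧
      (∀ j, rlo Y j ≤ rhi X j ∧ rhi X j ≤ rhi Y j) ∧ (∀ j, j ≠ i → rlo Y j < rhi X j) ∧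
      rlo Y i = rhi X i ∧ rhi X i < rhi Y i := by
    intro i hi
    obtain ⟨Y, hYT, hY1, hY2, hY3⟩ := dir_tile hT hd0 (rhi X) (fun j => if j = i then 1 else -1)
      hc (by
        intro j hj
        by_cases h : j = i
        · subst h; exact hi
        · simp only [if_neg h] at hj; linarith)
    have hlt : ∀ j, j ≠ i → rlo Y j < rhi X j := fun j hj => hY2 j (by simp [hj])
    have hhi : rhi X i < rhi Y i := hY3 i (by simp)
    refine ⟨Y, hYT, hY1, hlt, ?_, hhi⟩
    by_contra hne
    have hlti : rlo Y i < rhi X i := lt_of_le_of_ne (hY1 i).1 hne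
    have hXY : X = Y := by
      apply overlap_eq hT hX hYT
      intro j
      have hrlo : rlo Y j < rhi X j := by
        by_cases h : j = i
        · subst h; exact hlti
        · exact hlt j h
      apply max_lt
      · apply lt_min
        · exact (hXre j).2.2.2.1
        · have := (hc j).1
          rw [hXlo j]
          linarith [(hY1 j).2]
      · exact lt_min hrlo (lt_of_lt_of_le hrlo (hY1 j).2)
    rw [hXY] at hhi
    exact lt_irrefl _ hhi
  haveI : Nonempty (Box d) := ⟨X⟩
  choose! Yf hYfT hYf1 hYf2 hYf3 hYf4 using hYi
  -- injectivity facts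
  have hYinj : ∀ i i', rhi X i < 1 → rhi X i' < 1 → Yf i = Yf i' → i = i' := by
    intro i i' hi hi' heq
    by_contra hne
    have h1 : rlo (Yf i) i = rhi X i := hYf3 i hi
    have h2 : rlo (Yf i') i < rhi X i := hYf2 i' hi' i hne
    rw [heq] at h1
    linarith
  have hYneX : ∀ i, rhi X i < 1 → Yf i ≠ X := by
    intro i hi heq
    have h := hYf4 i hi
    rw [heq] at h
    exact lt_irrefl _ h
  have hmemc : X.mem (rhi X) := (mem_iff hT hX _).mpr fun j => ⟨(hXre j).2.2.2.1.le, le_refl _⟩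
  set J : Finset (Fin d) := Finset.univ.filter (fun j => rhi X j < 1) with hJ
  -- extBox facts
  have hexthi : ∀ j : Fin d, (extBox d j true).hi j = ⊤ := by
    intro j
    show (if j < j then _ else if j = j then _ else _) = ⊤
    rw [if_neg (lt_irrefl j), if_pos rfl]
    rfl
  have hextlo : ∀ j : Fin d, (extBox d j true).lo j = ((1 : ℝ) : EReal) := by
    intro j
    show (if j < j then _ else if j = j then _ else _) = _
    rw [if_neg (lt_irrefl j), if_pos rfl]
    rfl
  have hTnotext : ∀ B, B ∈ 𝒯 → ∀ j, B ≠ extBox d j true := by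
    intro B hB j heq
    have h1 := (real_endpoints hT hB j).2.1
    rw [heq, hexthi j] at h1
    exact EReal.coe_ne_top _ h1.symm
  have hextinj : ∀ j j' : Fin d, extBox d j true = extBox d j' true → j = j' := by
    intro j j' heq
    by_contra hne
    rcases lt_or_gt_of_ne hne with h | h
    · have h1 := hexthi j
      rw [heq] at h1
      have h2 : (extBox d j' true).hi j = ((1 : ℝ) : EReal) := by
        show (if j < j' then _ else _) = _
        rw [if_pos h]
      rw [h2] at h1
      exact EReal.coe_ne_top _ h1
    · have h1 := hextlo j
      rw [heq] at h1
      have h2 : (extBox d j' true).lo j = ⊥ := by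
        show (if j < j' then _ else if j = j' then _ else _) = _
        rw [if_neg (by omega : ¬ j < j'), if_neg (by exact fun hh => hne hh)]
      rw [h2] at h1
      exact EReal.coe_ne_bot _ h1.symm
  have hextmem : ∀ j : Fin d, ¬ rhi X j < 1 → (extBox d j true).mem (rhi X) := by
    intro j hj k
    rcases lt_trichotomy k j with h | h | h
    · constructor
      · show (if k < j then ((-1 : ℝ) : EReal) else _) ≤ _
        rw [if_pos h]
        exact EReal.coe_le_coe_iff.mpr (hc k).1.le
      · show _ ≤ (if k < j then ((1 : ℝ) : EReal) else _)
        rw [if_pos h]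
        exact EReal.coe_le_coe_iff.mpr (hc k).2
    · subst h
      constructor
      · rw [hextlo k]
        exact EReal.coe_le_coe_iff.mpr (le_of_not_gt hj)
      · rw [hexthi k]
        exact le_top
    · constructor
      · show (if k < j then _ else if k = j then _ else (⊥ : EReal)) ≤ _
        rw [if_neg (by omega : ¬ k < j), if_neg (by intro hh; omega)]
        exact bot_le
      · show _ ≤ (if k < j then _ else if k = j then _ else (⊤ : EReal))
        rw [if_neg (by omega : ¬ k < j), if_neg (by intro hh; omega)]
        exact le_top
  -- classification of tiles containing the corner
  have classify : ∀ Z, Z ∈ 𝒯 → Z.mem (rhi X) → Z = X ∨ ∃ i, rhi X i < 1 ∧ Z = Yf i := by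
    intro Z hZT hZc
    by_contra hcon
    push_neg at hcon
    obtain ⟨hZX, hZY⟩ := hcon
    set E : Finset (Box d) := (Finset.univ.filter (fun j => ¬ rhi X j < 1)).image
      (fun j => extBox d j true) with hE
    set G : Finset (Box d) := insert Z (insert X (J.image Yf ∪ E)) with hG
    have hGsub : G ⊆ (withExt 𝒯).filter (fun B => B.mem (rhi X)) := by
      intro B hB
      simp only [hG, Finset.mem_insert, Finset.mem_union] at hB
      rcases hB with rfl | rfl | hB | hB
      · exact Finset.mem_filter.mpr ⟨Finset.mem_union_left _ hZT, hZc⟩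
      · exact Finset.mem_filter.mpr ⟨Finset.mem_union_left _ hX, hmemc⟩
      · obtain ⟨i, hiJ, rfl⟩ := Finset.mem_image.mp hB
        have hi : rhi X i < 1 := (Finset.mem_filter.mp hiJ).2
        exact Finset.mem_filter.mpr ⟨Finset.mem_union_left _ (hYfT i hi),
          (mem_iff hT (hYfT i hi) _).mpr (hYf1 i hi)⟩
      · obtain ⟨j, hjJ, rfl⟩ := Finset.mem_image.mp hB
        have hj : ¬ rhi X j < 1 := (Finset.mem_filter.mp hjJ).2
        refine Finset.mem_filter.mpr ⟨Finset.mem_union_right _ ?_, hextmem j hj⟩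
        exact Finset.mem_image.mpr ⟨(j, true), Finset.mem_univ _, rfl⟩
    have hcard1 : (J.image Yf).card = J.card := by
      apply Finset.card_image_of_injOn
      intro i hi i' hi' h
      exact hYinj i i' (Finset.mem_filter.mp hi).2 (Finset.mem_filter.mp hi').2 h
    have hcard2 : E.card = d - J.card := by
      rw [hE, Finset.card_image_of_injOn (fun j _ j' _ h => hextinj j j' h)]
      have hh := Finset.card_filter_add_card_filter_not
        (s := (Finset.univ : Finset (Fin d))) (p := fun j => rhi X j < 1)
      simp only [Finset.card_univ, Fintype.card_fin] at hh
      rw [← hJ] at hh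
      omega
    have hdisj1 : Disjoint (J.image Yf) E := by
      rw [Finset.disjoint_left]
      intro B hB hBE
      obtain ⟨i, hiJ, rfl⟩ := Finset.mem_image.mp hB
      obtain ⟨j, hjJ, hj⟩ := Finset.mem_image.mp hBE
      exact hTnotext _ (hYfT i (Finset.mem_filter.mp hiJ).2) j hj.symm
    have hXnot : X ∉ J.image Yf ∪ E := by
      intro hXm
      rcases Finset.mem_union.mp hXm with h | h
      · obtain ⟨i, hiJ, hi⟩ := Finset.mem_image.mp h
        exact hYneX i (Finset.mem_filter.mp hiJ).2 hi
      · obtain ⟨j, hjJ, hj⟩ := Finset.mem_image.mp h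
        exact hTnotext X hX j hj.symm
    have hZnot : Z ∉ insert X (J.image Yf ∪ E) := by
      intro hZm
      rcases Finset.mem_insert.mp hZm with h | h
      · exact hZX h
      · rcases Finset.mem_union.mp h with h2 | h2
        · obtain ⟨i, hiJ, hi⟩ := Finset.mem_image.mp h2
          exact hZY i (Finset.mem_filter.mp hiJ).2 hi.symm
        · obtain ⟨j, hjJ, hj⟩ := Finset.mem_image.mp h2
          exact hTnotext Z hZT j hj.symm
    have hJle : J.card ≤ d := by
      have := Finset.card_filter_le (Finset.univ : Finset (Fin d)) (fun j => rhi X j < 1)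
      simpa [Finset.card_univ] using this
    have hGcard : G.card = d + 2 := by
      rw [hG, Finset.card_insert_of_notMem hZnot, Finset.card_insert_of_notMem hXnot,
        Finset.card_union_of_disjoint hdisj1, hcard1, hcard2]
      omega
    have hPc := hP (rhi X)
    have hle := Finset.card_le_card hGsub
    rw [hGcard] at hle
    omega
  -- J is nonempty
  have hJne : ∃ j, rhi X j < 1 := by
    by_contra hcon
    push_neg at hcon
    obtain ⟨Z, hZT, hZX⟩ := Finset.exists_mem_ne hcard X
    have hXZ : X = Z := by
      apply overlap_eq hT hX hZT
      intro j
      have hz := real_endpoints hT hZT j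
      apply max_lt
      · apply lt_min
        · exact (hXre j).2.2.2.1
        · rw [hXlo j]
          linarith [hz.2.2.1, hz.2.2.2.1]
      · apply lt_min
        · have := hcon j
          linarith [hz.2.2.2.1, hz.2.2.2.2]
        · exact hz.2.2.2.1
    exact hZX hXZ.symm
  -- the sets A i
  set A : Fin d → Finset (Fin d) := fun i => Finset.univ.filter
    (fun j => rhi X j < rhi (Yf i) j) with hA
  have hAsubJ : ∀ i, rhi X i < 1 → A i ⊆ J := by
    intro i hi j hj
    have hj2 := (Finset.mem_filter.mp hj).2
    have h3 := (real_endpoints hT (hYfT i hi) j).2.2.2.2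
    exact Finset.mem_filter.mpr ⟨Finset.mem_univ j, lt_of_lt_of_le hj2 h3⟩
  have hAmem : ∀ i, rhi X i < 1 → i ∈ A i := fun i hi =>
    Finset.mem_filter.mpr ⟨Finset.mem_univ i, hYf4 i hi⟩
  have hAtwo : ∀ i, rhi X i < 1 → 2 ≤ (A i).card := by
    intro i hi
    have hloeq : X.hi i = (Yf i).lo i := by
      rw [(hXre i).2.1, (real_endpoints hT (hYfT i hi) i).1]
      exact_mod_cast (congrArg (fun x : ℝ => (x : EReal)) (hYf3 i hi).symm)
    obtain ⟨j, hji, hjne⟩ := hgoal i (Yf i) (hYfT i hi) hloeq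
    have hjA : j ∈ A i := by
      refine Finset.mem_filter.mpr ⟨Finset.mem_univ j, ?_⟩
      have h1 : rhi X j ≤ rhi (Yf i) j := (hYf1 i hi j).2
      rcases lt_or_eq_of_le h1 with h | h
      · exact h
      · exact absurd (by rw [(hXre j).2.1, (real_endpoints hT (hYfT i hi) j).2.1, h]) hjne
    have : 1 < (A i).card := Finset.one_lt_card.mpr
      ⟨i, hAmem i hi, j, hjA, fun h => hji h.symm⟩
    omega
  -- covering
  have hcover : ∀ S : Finset (Fin d), S ⊆ J → S.Nonempty →
      ∃ i, rhi X i < 1 ∧ i ∈ S ∧ S ⊆ A i := by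
    intro S hSJ hSne
    obtain ⟨Z, hZT, hZ1, hZ2, hZ3⟩ := dir_tile hT hd0 (rhi X)
      (fun j => if j ∈ S then 1 else -1) hc (by
        intro j hj
        by_cases h : j ∈ S
        · exact (Finset.mem_filter.mp (hSJ h)).2
        · simp only [if_neg h] at hj; linarith)
    have hZmem : Z.mem (rhi X) := (mem_iff hT hZT _).mpr hZ1
    rcases classify Z hZT hZmem with hZX | ⟨i, hi, hZY⟩
    · exfalso
      obtain ⟨j0, hj0⟩ := hSne
      have h := hZ3 j0 (by simp [hj0])
      rw [hZX] at h
      exact lt_irrefl _ h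
    · refine ⟨i, hi, ?_, ?_⟩
      · by_contra hiS
        have h1 := hZ2 i (by simp [hiS])
        rw [hZY, hYf3 i hi] at h1
        exact lt_irrefl _ h1
      · intro j hjS
        refine Finset.mem_filter.mpr ⟨Finset.mem_univ j, ?_⟩
        have h := hZ3 j (by simp [hjS])
        rwa [hZY] at h
  -- uniqueness
  have huniq : ∀ S : Finset (Fin d), ∀ i i', rhi X i < 1 → rhi X i' < 1 →
      i ∈ S → S ⊆ A i → i' ∈ S → S ⊆ A i' → i = i' := by
    intro S i i' hi hi' hiS hSAi hi'S hSAi'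
    apply hYinj i i' hi hi'
    apply overlap_eq hT (hYfT i hi) (hYfT i' hi')
    intro j
    by_cases hjS : j ∈ S
    · have h1 : rhi X j < rhi (Yf i) j := (Finset.mem_filter.mp (hSAi hjS)).2
      have h2 : rhi X j < rhi (Yf i') j := (Finset.mem_filter.mp (hSAi' hjS)).2
      have h3 : rlo (Yf i) j ≤ rhi X j := (hYf1 i hi j).1
      have h4 : rlo (Yf i') j ≤ rhi X j := (hYf1 i' hi' j).1
      exact lt_of_le_of_lt (max_le h3 h4) (lt_min h1 h2)
    · have hji : j ≠ i := fun h => hjS (h ▸ hiS)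
      have hji' : j ≠ i' := fun h => hjS (h ▸ hi'S)
      have h1 : rlo (Yf i) j < rhi X j := hYf2 i hi j hji
      have h2 : rlo (Yf i') j < rhi X j := hYf2 i' hi' j hji'
      have h3 : rhi X j ≤ rhi (Yf i) j := (hYf1 i hi j).2
      have h4 : rhi X j ≤ rhi (Yf i') j := (hYf1 i' hi' j).2
      exact lt_of_lt_of_le (max_lt h1 h2) (le_min h3 h4)
  -- counting
  set C : Fin d → Finset (Finset (Fin d)) := fun i =>
    ((A i).powerset).filter (fun S => i ∈ S) with hC
  have hCeq : J.powerset.erase ∅ = J.biUnion C := by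
    apply Finset.ext
    intro S
    simp only [Finset.mem_erase, Finset.mem_powerset, Finset.mem_biUnion, hC,
      Finset.mem_filter]
    constructor
    · rintro ⟨hne, hSJ⟩
      obtain ⟨i, hi, hiS, hSA⟩ := hcover S hSJ (Finset.nonempty_iff_ne_empty.mpr hne)
      exact ⟨i, Finset.mem_filter.mpr ⟨Finset.mem_univ i, hi⟩, hSA, hiS⟩
    · rintro ⟨i, hiJ, hSA, hiS⟩
      have hi : rhi X i < 1 := (Finset.mem_filter.mp hiJ).2
      refine ⟨?_, hSA.trans (hAsubJ i hi)⟩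
      intro h
      rw [h] at hiS
      exact Finset.notMem_empty i hiS
  have hCdisj : ∀ i ∈ J, ∀ i' ∈ J, i ≠ i' → Disjoint (C i) (C i') := by
    intro i hiJ i' hi'J hne
    rw [Finset.disjoint_left]
    intro S hSi hSi'
    have h1 := Finset.mem_filter.mp hSi
    have h2 := Finset.mem_filter.mp hSi'
    exact hne (huniq S i i' (Finset.mem_filter.mp hiJ).2 (Finset.mem_filter.mp hi'J).2
      h1.2 (Finset.mem_powerset.mp h1.1) h2.2 (Finset.mem_powerset.mp h2.1))
  have hcount : (J.biUnion C).card = ∑ i ∈ J, (C i).card := Finset.card_biUnion hCdisj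
  have hCcard : ∀ i, rhi X i < 1 → (C i).card = 2 ^ ((A i).card - 1) := by
    intro i hi
    have hiA : i ∈ A i := hAmem i hi
    have hbij : (C i).card = (((A i).erase i).powerset).card := by
      refine Finset.card_bij' (fun S _ => S.erase i) (fun S _ => insert i S) ?_ ?_ ?_ ?_
      case refine_1 =>
        intro S hS
        have h := Finset.mem_filter.mp hS
        exact Finset.mem_powerset.mpr (Finset.erase_subset_erase i
          (Finset.mem_powerset.mp h.1))
      case refine_2 =>
        intro S hS
        have h := Finset.mem_powerset.mp hS
        refine Finset.mem_filter.mpr ⟨Finset.mem_powerset.mpr ?_, Finset.mem_insert_self i S⟩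
        intro x hx
        rcases Finset.mem_insert.mp hx with rfl | hx2
        · exact hiA
        · exact (Finset.erase_subset i (A i)) (h hx2)
      case refine_3 =>
        intro S hS
        exact Finset.insert_erase (Finset.mem_filter.mp hS).2
      case refine_4 =>
        intro S hS
        apply Finset.erase_insert
        intro hiS
        exact Finset.notMem_erase i (A i) (Finset.mem_powerset.mp hS hiS)
    rw [hbij, Finset.card_powerset, Finset.card_erase_of_mem hiA]
  have hJcard : 1 ≤ J.card := by
    obtain ⟨j, hj⟩ := hJne
    exact Finset.card_pos.mpr ⟨j, Finset.mem_filter.mpr ⟨Finset.mem_univ j, hj⟩⟩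
  have hmain : 2 ^ J.card - 1 = ∑ i ∈ J, (C i).card := by
    rw [← hcount, ← hCeq, Finset.card_erase_of_mem (Finset.empty_mem_powerset J),
      Finset.card_powerset]
  have heven : 2 ∣ ∑ i ∈ J, (C i).card := by
    apply Finset.dvd_sum
    intro i hiJ
    have hi := (Finset.mem_filter.mp hiJ).2
    rw [hCcard i hi]
    have h2 := hAtwo i hi
    exact dvd_pow_self 2 (by omega)
  rw [← hmain] at heven
  have h1 : (2 : ℕ) ∣ 2 ^ J.card := dvd_pow_self 2 (by omega)
  have h2 := Nat.dvd_sub h1 heven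
  have h3 : 2 ^ J.card - (2 ^ J.card - 1) = 1 := by
    have : 1 ≤ 2 ^ J.card := Nat.one_le_two_pow
    omega
  rw [h3] at h2
  omega

end
end
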